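/- For all real numbers γ, φ ≥ 0, the expected total number of social-multicast destinations W(γ, φ, n) satisfies: if φ > 2, W = Θ(n) for all γ ≥ 0; if φ = 2, W = Θ(n) for γ > 1 and W = Θ(n·log n) for 0 ≤ γ ≤ 1; if 1 < φ < 2, W = Θ(n) for γ > 3−φ, Θ(n·log n) for γ = 3−φ, Θ(n^{4−γ−φ}) for 1 < γ < 3−φ, Θ(n^{3−φ}/log n) for γ = 1, and Θ(n^{3−φ}) for 0 ≤ γ < 1; if φ = 1, W = Θ(n) for γ > 2, Θ(n^{3−γ}/log n) for 1 < γ < 2, Θ(n²/(log n)²) for γ = 1, and Θ(n²/log n) for 0 ≤ γ < 1; if 0 ≤ φ < 1, W = Θ(n) for γ > 2, Θ(n·log n) for γ = 2, Θ(n^{3−γ}) for 1 < γ < 2, Θ(n²/log n) for γ = 1, and Θ(n²) for 0 ≤ γ < 1. -/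

import Mathlib

/-- `f(n) = Θ(h(n))`: there exist constants `0 < c₁ ≤ c₂` and `N₀` such that
`c₁·h(n) ≤ f(n) ≤ c₂·h(n)` for all integers `n ≥ N₀`. -/
def IsBigTheta (f h : ℕ → ℝ) : Prop :=
  ∃ c₁ c₂ : ℝ, 0 < c₁ ∧ c₁ ≤ c₂ ∧ ∃ N₀ : ℕ, ∀ n : ℕ, N₀ ≤ n →
    c₁ * h n ≤ f n ∧ f n ≤ c₂ * h n

/-- Zipf normalization `Z(γ, n) = Σ_{j=1}^{n−1} j^{−γ}`. -/
noncomputable def Z (γ : ℝ) (n : ℕ) : ℝ := ∑ j ∈ Finset.Icc 1 (n - 1), (j : ℝ) ^ (-γ)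

/-- `Z_φ(l) = Σ_{m=1}^{l} m^{−φ}`. -/
noncomputable def Zphi (φ : ℝ) (l : ℕ) : ℝ := ∑ m ∈ Finset.Icc 1 l, (m : ℝ) ^ (-φ)

/-- `D₁(φ, l) = Z_φ(l)⁻¹·Σ_{d=1}^{l} d^{1−φ}`. -/
noncomputable def D1 (φ : ℝ) (l : ℕ) : ℝ :=
  (Zphi φ l)⁻¹ * ∑ d ∈ Finset.Icc 1 l, (d : ℝ) ^ (1 - φ)

/-- Expected total number of social-multicast destinations
`W(γ, φ, n) = n·Z(γ, n)⁻¹·Σ_{l=1}^{n−1} l^{−γ}·D₁(φ, l)`. -/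
noncomputable def W (γ φ : ℝ) (n : ℕ) : ℝ :=
  n * (Z γ n)⁻¹ * ∑ l ∈ Finset.Icc 1 (n - 1), (l : ℝ) ^ (-γ) * D1 φ l


open Filter Real Finset


/-- Two-sided eventual comparison with positivity of the comparison function. -/
def Th (f h : ℕ → ℝ) : Prop :=
  ∃ c₁ c₂ : ℝ, 0 < c₁ ∧ ∀ᶠ n in atTop, 0 < h n ∧ c₁ * h n ≤ f n ∧ f n ≤ c₂ * h n

namespace Th

theorem isBigTheta {f h : ℕ → ℝ} (hf : Th f h) : IsBigTheta f h := by
  obtain ⟨c₁, c₂, hc₁, hev⟩ := hf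
  obtain ⟨N₀, hN⟩ := eventually_atTop.1 hev
  obtain ⟨h1, h2, h3⟩ := hN N₀ le_rfl
  exact ⟨c₁, c₂, hc₁, le_of_mul_le_mul_right (h2.trans h3) h1, N₀, fun n hn => (hN n hn).2⟩

theorem c₂_pos {f h : ℕ → ℝ} (hf : Th f h) : ∃ c₁ c₂ : ℝ, 0 < c₁ ∧ 0 < c₂ ∧
    ∀ᶠ n in atTop, 0 < h n ∧ c₁ * h n ≤ f n ∧ f n ≤ c₂ * h n := by
  obtain ⟨c₁, c₂, hc₁, hev⟩ := hf
  obtain ⟨n, hh, h2, h3⟩ := hev.exists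
  refine ⟨c₁, c₂, hc₁, ?_, hev⟩
  have hc2 : 0 < c₂ * h n := lt_of_lt_of_le (mul_pos hc₁ hh) (h2.trans h3)
  by_contra hc
  push_neg at hc
  nlinarith

theorem mul {f g h k : ℕ → ℝ} (hf : Th f h) (hg : Th g k) :
    Th (fun n => f n * g n) (fun n => h n * k n) := by
  obtain ⟨c₁, c₂, hc₁, hc₂, hev⟩ := hf.c₂_pos
  obtain ⟨d₁, d₂, hd₁, hd₂, hev'⟩ := hg.c₂_pos
  refine ⟨c₁ * d₁, c₂ * d₂, by positivity, ?_⟩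
  filter_upwards [hev, hev'] with n ⟨hh, h1, h2⟩ ⟨hk, h3, h4⟩
  refine ⟨by positivity, ?_, ?_⟩
  · calc c₁ * d₁ * (h n * k n) = (c₁ * h n) * (d₁ * k n) := by ring
    _ ≤ f n * g n := mul_le_mul h1 h3 (by positivity) ((by positivity : (0:ℝ) < c₁ * h n).le.trans h1)
  · calc f n * g n ≤ (c₂ * h n) * (d₂ * k n) :=
        mul_le_mul h2 h4 ((by positivity : (0:ℝ) < d₁ * k n).le.trans h3) (by positivity)
    _ = c₂ * d₂ * (h n * k n) := by ring

theorem inv {f h : ℕ → ℝ} (hf : Th f h) :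
    Th (fun n => (f n)⁻¹) (fun n => (h n)⁻¹) := by
  obtain ⟨c₁, c₂, hc₁, hc₂, hev⟩ := hf.c₂_pos
  refine ⟨c₂⁻¹, c₁⁻¹, by positivity, ?_⟩
  filter_upwards [hev] with n ⟨hh, h1, h2⟩
  have hfpos : 0 < f n := lt_of_lt_of_le (by positivity) h1
  refine ⟨by positivity, ?_, ?_⟩
  · rw [show c₂⁻¹ * (h n)⁻¹ = (c₂ * h n)⁻¹ by rw [mul_inv]]
    exact inv_anti₀ hfpos h2
  · rw [show c₁⁻¹ * (h n)⁻¹ = (c₁ * h n)⁻¹ by rw [mul_inv]]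
    exact inv_anti₀ (by positivity) h1

theorem trans {f g h : ℕ → ℝ} (hf : Th f g) (hg : Th g h) : Th f h := by
  obtain ⟨c₁, c₂, hc₁, hc₂, hev⟩ := hf.c₂_pos
  obtain ⟨d₁, d₂, hd₁, hd₂, hev'⟩ := hg.c₂_pos
  refine ⟨c₁ * d₁, c₂ * d₂, by positivity, ?_⟩
  filter_upwards [hev, hev'] with n ⟨hg0, h1, h2⟩ ⟨hh0, h3, h4⟩
  refine ⟨hh0, ?_, ?_⟩
  · calc c₁ * d₁ * h n = c₁ * (d₁ * h n) := by ring
    _ ≤ c₁ * g n := by nlinarith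
    _ ≤ f n := h1
  · calc f n ≤ c₂ * g n := h2
    _ ≤ c₂ * (d₂ * h n) := by nlinarith
    _ = c₂ * d₂ * h n := by ring

theorem congr_left {f f' h : ℕ → ℝ} (hf : Th f h) (he : ∀ᶠ n in atTop, f n = f' n) :
    Th f' h := by
  obtain ⟨c₁, c₂, hc₁, hev⟩ := hf
  exact ⟨c₁, c₂, hc₁, by filter_upwards [hev, he] with n h1 h2; rwa [← h2]⟩

theorem congr_right {f h h' : ℕ → ℝ} (hf : Th f h) (he : ∀ᶠ n in atTop, h n = h' n) :
    Th f h' := by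
  obtain ⟨c₁, c₂, hc₁, hev⟩ := hf
  exact ⟨c₁, c₂, hc₁, by filter_upwards [hev, he] with n h1 h2; rwa [h2] at h1⟩

theorem refl {h : ℕ → ℝ} (hp : ∀ᶠ n in atTop, 0 < h n) : Th h h :=
  ⟨1, 1, one_pos, by filter_upwards [hp] with n h1; exact ⟨h1, by linarith, by linarith⟩⟩

theorem shift {F h : ℕ → ℝ} (hf : Th F h) :
    Th (fun n => F (n - 1)) (fun n => h (n - 1)) := by
  obtain ⟨c₁, c₂, hc₁, hev⟩ := hf
  obtain ⟨N₀, hN⟩ := eventually_atTop.1 hev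
  exact ⟨c₁, c₂, hc₁, eventually_atTop.2 ⟨N₀ + 1, fun n hn => hN _ (by omega)⟩⟩

end Th

/-- `P a b m = m^a * (log m)^b` (both rpow). -/
noncomputable def P (a b : ℝ) (m : ℕ) : ℝ := (m : ℝ) ^ a * Real.log m ^ b

theorem P_pos {a b : ℝ} {m : ℕ} (hm : 2 ≤ m) : 0 < P a b m := by
  have h1 : (1 : ℝ) < m := by exact_mod_cast hm
  have h2 : 0 < Real.log m := Real.log_pos h1
  exact mul_pos (Real.rpow_pos_of_pos (by linarith) a) (Real.rpow_pos_of_pos h2 b)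

theorem P_mul {a b c d : ℝ} {m : ℕ} (hm : 2 ≤ m) :
    P a b m * P c d m = P (a + c) (b + d) m := by
  have h1 : (0 : ℝ) < m := by positivity
  have h2 : 0 < Real.log m := Real.log_pos (by exact_mod_cast hm)
  simp only [P, Real.rpow_add h1, Real.rpow_add h2]; ring

theorem P_inv {a b : ℝ} {m : ℕ} (hm : 1 ≤ m) :
    (P a b m)⁻¹ = P (-a) (-b) m := by
  have h1 : (0 : ℝ) ≤ m := by positivity
  have h2 : (0:ℝ) ≤ Real.log m := Real.log_nonneg (by exact_mod_cast hm)
  simp only [P, Real.rpow_neg h1, Real.rpow_neg h2, mul_inv]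

theorem P_zero_eq (q : ℝ) (m : ℕ) : P q 0 m = (m : ℝ) ^ q := by
  simp [P]

theorem P_one_eq (q : ℝ) (m : ℕ) : P q 1 m = (m : ℝ) ^ q * Real.log m := by
  simp [P]

theorem P_negone_eq (q : ℝ) {m : ℕ} (hm : 1 ≤ m) :
    P q (-1) m = (m : ℝ) ^ q * (Real.log m)⁻¹ := by
  rcases eq_or_lt_of_le hm with h | h
  · simp [P, ← h]
  · have h2 : 0 < Real.log m := Real.log_pos (by exact_mod_cast h)
    rw [P, Real.rpow_neg h2.le, Real.rpow_one]

/-- Ratio bound for rpow with comparable bases. -/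
theorem rpow_ratio {x y : ℝ} (r : ℝ) (hx : 0 < x) (hxy : x ≤ y) (hy2 : y ≤ 2 * x) :
    y ^ r ≤ 2 ^ |r| * x ^ r ∧ x ^ r ≤ 2 ^ |r| * y ^ r := by
  have hy : 0 < y := lt_of_lt_of_le hx hxy
  have hd1 : (1:ℝ) ≤ y / x := (one_le_div hx).2 hxy
  have hd2 : y / x ≤ 2 := (div_le_iff₀ hx).2 (by linarith)
  have he1 : y ^ r = (y / x) ^ r * x ^ r := by
    rw [← Real.mul_rpow (by positivity) hx.le, div_mul_cancel₀ _ hx.ne']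
  have he2 : x ^ r = (x / y) ^ r * y ^ r := by
    rw [← Real.mul_rpow (by positivity) hy.le, div_mul_cancel₀ _ hy.ne']
  have hxd1 : (1:ℝ)/2 ≤ x / y := by
    rw [div_le_div_iff₀ two_pos hy]; linarith
  have hxd2 : x / y ≤ 1 := (div_le_one hy).2 hxy
  constructor
  · rw [he1]
    gcongr
    rcases le_or_gt 0 r with hr | hr
    · rw [abs_of_nonneg hr]
      exact Real.rpow_le_rpow (by positivity) hd2 hr
    · calc (y/x) ^ r ≤ 1 ^ r := Real.rpow_le_rpow_of_nonpos (by linarith) hd1 hr.le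
      _ = 1 := Real.one_rpow r
      _ ≤ 2 ^ |r| := Real.one_le_rpow one_le_two (abs_nonneg r)
  · rw [he2]
    gcongr
    rcases le_or_gt 0 r with hr | hr
    · calc (x/y) ^ r ≤ 1 ^ r := Real.rpow_le_rpow (by positivity) hxd2 hr
      _ = 1 := Real.one_rpow r
      _ ≤ 2 ^ |r| := Real.one_le_rpow one_le_two (abs_nonneg r)
    · rw [abs_of_neg hr]
      calc (x/y) ^ r ≤ ((1:ℝ)/2) ^ r := Real.rpow_le_rpow_of_nonpos (by norm_num) hxd1 hr.le
      _ = 2 ^ (-r) := by rw [one_div, Real.inv_rpow two_pos.le, ← Real.rpow_neg two_pos.le]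

/-- Shifting by one does not change the `P` growth class. -/
theorem Th_P_shift (a b : ℝ) : Th (fun n => P a b (n - 1)) (P a b) := by
  refine ⟨(2 ^ |a| * 2 ^ |b|)⁻¹, 2 ^ |a| * 2 ^ |b|, by positivity, ?_⟩
  rw [eventually_atTop]
  refine ⟨4, fun n hn => ?_⟩
  have hn4 : (4:ℝ) ≤ n := by exact_mod_cast hn
  have hx : (0:ℝ) < ((n-1 : ℕ):ℝ) := by
    have : 3 ≤ n - 1 := by omega
    have : (3:ℝ) ≤ ((n-1:ℕ):ℝ) := by exact_mod_cast this
    linarith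
  have hcast : ((n-1 : ℕ):ℝ) = (n:ℝ) - 1 := by
    have : 1 ≤ n := by omega
    push_cast [Nat.cast_sub this]; ring
  have hxy : ((n-1:ℕ):ℝ) ≤ (n:ℝ) := by rw [hcast]; linarith
  have hy2 : (n:ℝ) ≤ 2 * ((n-1:ℕ):ℝ) := by rw [hcast]; linarith
  obtain ⟨ha1, ha2⟩ := rpow_ratio a hx hxy hy2
  -- log bounds
  have hlx : 0 < Real.log ((n-1:ℕ):ℝ) := Real.log_pos (by rw [hcast]; linarith)
  have hl1 : Real.log ((n-1:ℕ):ℝ) ≤ Real.log n := Real.log_le_log hx hxy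
  have hl2 : Real.log (n:ℝ) ≤ 2 * Real.log ((n-1:ℕ):ℝ) := by
    have he : 2 * Real.log ((n-1:ℕ):ℝ) = Real.log (((n-1:ℕ):ℝ) ^ (2:ℕ)) := by
      rw [Real.log_pow]; norm_num
    rw [he]
    apply Real.log_le_log (by linarith)
    rw [hcast]; nlinarith
  obtain ⟨hb1, hb2⟩ := rpow_ratio b hlx hl1 hl2
  have hP : 0 < P a b n := P_pos (by omega)
  have hPx : 0 < P a b (n-1) := P_pos (by omega)
  refine ⟨hP, ?_, ?_⟩
  · rw [inv_mul_le_iff₀ (by positivity)]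
    calc P a b n = (n:ℝ) ^ a * Real.log n ^ b := rfl
    _ ≤ (2 ^ |a| * ((n-1:ℕ):ℝ) ^ a) * (2 ^ |b| * Real.log ((n-1:ℕ):ℝ) ^ b) := by
        apply mul_le_mul ha1 hb1 (Real.rpow_nonneg (Real.log_nonneg (by linarith)) b) (by positivity)
    _ = 2 ^ |a| * 2 ^ |b| * P a b (n-1) := by rw [P]; ring
  · calc P a b (n-1) = ((n-1:ℕ):ℝ) ^ a * Real.log ((n-1:ℕ):ℝ) ^ b := rfl
    _ ≤ (2 ^ |a| * (n:ℝ) ^ a) * (2 ^ |b| * Real.log (n:ℝ) ^ b) := by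
        apply mul_le_mul ha2 hb2 (Real.rpow_nonneg hlx.le b) (by positivity)
    _ = 2 ^ |a| * 2 ^ |b| * P a b n := by rw [P]; ring

theorem log_le_rpow_div {x ε : ℝ} (hx : 1 ≤ x) (hε : 0 < ε) :
    Real.log x ≤ x ^ ε / ε := by
  have hx0 : (0:ℝ) < x := by linarith
  have h1 : ε * Real.log x = Real.log (x ^ ε) := (Real.log_rpow hx0 ε).symm
  have h2 : Real.log (x ^ ε) ≤ x ^ ε - 1 := Real.log_le_sub_one_of_pos (by positivity)
  rw [le_div_iff₀ hε, mul_comm]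
  nlinarith

theorem tendsto_P_log {b : ℝ} (hb : 0 < b) : Filter.Tendsto (P 0 b) Filter.atTop Filter.atTop := by
  have : P 0 b = fun n : ℕ => Real.log n ^ b := by
    funext n; simp [P]
  rw [this]
  exact (tendsto_rpow_atTop hb).comp (Real.tendsto_log_atTop.comp tendsto_natCast_atTop_atTop)

theorem tendsto_P_pos {a : ℝ} (b : ℝ) (ha : 0 < a) :
    Filter.Tendsto (P a b) Filter.atTop Filter.atTop := by
  set c : ℝ := |b| + 1 with hc
  have hcpos : (0:ℝ) < c := by positivity
  have hlog : ∀ᶠ x : ℝ in Filter.atTop, Real.log x ≤ x ^ (a / (2 * c)) := by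
    have := (isLittleO_log_rpow_atTop (by positivity : (0:ℝ) < a / (2 * c))).def one_pos
    filter_upwards [this, Filter.eventually_ge_atTop (1:ℝ)] with x h hx1
    rw [one_mul] at h
    calc Real.log x ≤ ‖Real.log x‖ := le_abs_self _
    _ ≤ ‖x ^ (a / (2*c))‖ := h
    _ = x ^ (a / (2*c)) := abs_of_nonneg (Real.rpow_nonneg (by linarith) _)
  have hev : ∀ᶠ n : ℕ in Filter.atTop, (n:ℝ) ^ (a/2) ≤ P a b n := by
    filter_upwards [tendsto_natCast_atTop_atTop.eventually hlog,
      Filter.eventually_ge_atTop 3] with n hlogn hn3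
    have hn3' : (3:ℝ) ≤ n := by exact_mod_cast hn3
    have hn1 : (1:ℝ) ≤ n := by linarith
    have hln1 : (1:ℝ) ≤ Real.log n := by
      calc (1:ℝ) = Real.log (Real.exp 1) := (Real.log_exp 1).symm
      _ ≤ Real.log n := Real.log_le_log (Real.exp_pos 1) (by
          have := Real.exp_one_lt_d9
          linarith)
    have h1 : Real.log n ^ c ≤ (n:ℝ) ^ (a/2) := by
      calc Real.log n ^ c ≤ ((n:ℝ) ^ (a/(2*c))) ^ c :=
        Real.rpow_le_rpow (by linarith) hlogn hcpos.le
      _ = (n:ℝ) ^ (a/(2*c) * c) := (Real.rpow_mul (by linarith) _ _).symm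
      _ = (n:ℝ) ^ (a/2) := by rw [div_mul_eq_mul_div, mul_comm (2:ℝ) c, ← div_div,
          mul_div_assoc, div_self hcpos.ne', mul_one]
    have h2 : Real.log n ^ (-c) ≤ Real.log n ^ b :=
      Real.rpow_le_rpow_of_exponent_le hln1 (by rw [hc]; cases abs_cases b with
        | inl h => linarith [h.1]
        | inr h => linarith [h.1])
    have h3 : (0:ℝ) < Real.log n ^ c := Real.rpow_pos_of_pos (by linarith) c
    calc (n:ℝ) ^ (a/2) = (n:ℝ)^a * ((n:ℝ)^(a/2))⁻¹ := by
          rw [← Real.rpow_neg (by linarith), ← Real.rpow_add (by linarith)]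
          congr 1; ring
    _ ≤ (n:ℝ)^a * (Real.log n ^ c)⁻¹ :=
          mul_le_mul_of_nonneg_left (inv_anti₀ h3 h1) (Real.rpow_nonneg (by linarith) a)
    _ = (n:ℝ)^a * Real.log n ^ (-c) := by rw [← Real.rpow_neg (by linarith)]
    _ ≤ (n:ℝ)^a * Real.log n ^ b := by
          have := Real.rpow_nonneg (show (0:ℝ) ≤ n by linarith) a
          nlinarith
    _ = P a b n := rfl
  exact Filter.tendsto_atTop_mono' _ hev
    ((tendsto_rpow_atTop (by linarith)).comp tendsto_natCast_atTop_atTop)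

/-- The basic power sum. -/
noncomputable def F (q : ℝ) (m : ℕ) : ℝ := ∑ l ∈ Finset.Icc 1 m, (l : ℝ) ^ q

theorem F_nonneg (q : ℝ) (m : ℕ) : 0 ≤ F q m :=
  Finset.sum_nonneg fun l _ => Real.rpow_nonneg (Nat.cast_nonneg l) q

theorem F_mono (q : ℝ) {m m' : ℕ} (h : m ≤ m') : F q m ≤ F q m' :=
  Finset.sum_le_sum_of_subset_of_nonneg (Finset.Icc_subset_Icc_right h)
    (fun l _ _ => Real.rpow_nonneg (Nat.cast_nonneg l) q)

theorem antitoneOn_rpow {q : ℝ} (hq : q ≤ 0) (m : ℕ) :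
    AntitoneOn (fun x : ℝ => x ^ q) (Set.Icc ((1:ℕ):ℝ) ((m:ℕ):ℝ)) := by
  intro x hx y hy hxy
  exact Real.rpow_le_rpow_of_nonpos (by simpa using lt_of_lt_of_le one_pos (by exact_mod_cast hx.1)) hxy hq

theorem monotoneOn_rpow {q : ℝ} (hq : 0 ≤ q) (m : ℕ) :
    MonotoneOn (fun x : ℝ => x ^ q) (Set.Icc ((1:ℕ):ℝ) ((m:ℕ):ℝ)) := by
  intro x hx y hy hxy
  exact Real.rpow_le_rpow (le_trans zero_le_one (by simpa using hx.1)) hxy hq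

theorem F_int_le (q : ℝ) {m : ℕ} (hm : 1 ≤ m) :
    (∫ x in ((1:ℕ):ℝ)..((m:ℕ):ℝ), x ^ q) ≤ F q m := by
  rcases le_or_gt 0 q with hq | hq
  · calc (∫ x in ((1:ℕ):ℝ)..((m:ℕ):ℝ), x ^ q)
        ≤ ∑ x ∈ Finset.Ico 1 m, ((x + 1 : ℕ):ℝ) ^ q :=
          (monotoneOn_rpow hq m).integral_le_sum_Ico hm
    _ = ∑ x ∈ Finset.Ico 2 (m+1), ((x:ℕ):ℝ) ^ q := by
          rw [← Finset.sum_Ico_add (fun x : ℕ => ((x:ℕ):ℝ) ^ q) 1 m 1]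
          exact Finset.sum_congr rfl fun x _ => by rw [Nat.add_comm]
    _ = ∑ x ∈ Finset.Icc 2 m, ((x:ℕ):ℝ) ^ q := by rw [Finset.Ico_add_one_right_eq_Icc]
    _ ≤ F q m := Finset.sum_le_sum_of_subset_of_nonneg
          (Finset.Icc_subset_Icc_left (by norm_num))
          (fun l _ _ => Real.rpow_nonneg (Nat.cast_nonneg l) q)
  · calc (∫ x in ((1:ℕ):ℝ)..((m:ℕ):ℝ), x ^ q)
        ≤ ∑ x ∈ Finset.Ico 1 m, ((x:ℕ):ℝ) ^ q :=
          (antitoneOn_rpow hq.le m).integral_le_sum_Ico hm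
    _ ≤ F q m := Finset.sum_le_sum_of_subset_of_nonneg
          (by rw [← Finset.Ico_add_one_right_eq_Icc]; exact Finset.Ico_subset_Ico_right (by omega))
          (fun l _ _ => Real.rpow_nonneg (Nat.cast_nonneg l) q)

theorem F_le_int (q : ℝ) {m : ℕ} (hm : 1 ≤ m) :
    F q m ≤ 1 + (m:ℝ) ^ q + ∫ x in ((1:ℕ):ℝ)..((m:ℕ):ℝ), x ^ q := by
  rcases le_or_gt 0 q with hq | hq
  · have hsplit : F q m = (∑ x ∈ Finset.Ico 1 m, ((x:ℕ):ℝ) ^ q) + (m:ℝ) ^ q := by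
      rw [F, ← Finset.Ico_add_one_right_eq_Icc, Finset.sum_Ico_succ_top hm]
    have h2 : (∑ x ∈ Finset.Ico 1 m, ((x:ℕ):ℝ) ^ q) ≤ ∫ x in ((1:ℕ):ℝ)..((m:ℕ):ℝ), x ^ q :=
      (monotoneOn_rpow hq m).sum_le_integral_Ico hm
    have : (0:ℝ) ≤ (1:ℝ) := by norm_num
    linarith
  · have hsplit : F q m = 1 + ∑ x ∈ Finset.Icc 2 m, ((x:ℕ):ℝ) ^ q := by
      rw [F, show Finset.Icc 1 m = insert 1 (Finset.Icc 2 m) by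
        ext x; simp [Finset.mem_insert, Finset.mem_Icc]; omega]
      rw [Finset.sum_insert (by simp)]
      norm_num
    have h2 : (∑ x ∈ Finset.Icc 2 m, ((x:ℕ):ℝ) ^ q) ≤ ∫ x in ((1:ℕ):ℝ)..((m:ℕ):ℝ), x ^ q := by
      have := (antitoneOn_rpow hq.le m).sum_le_integral_Ico hm
      calc (∑ x ∈ Finset.Icc 2 m, ((x:ℕ):ℝ) ^ q)
          = ∑ x ∈ Finset.Ico 2 (m+1), ((x:ℕ):ℝ) ^ q := by rw [Finset.Ico_add_one_right_eq_Icc]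
      _ = ∑ x ∈ Finset.Ico 1 m, ((x+1:ℕ):ℝ) ^ q := by
          rw [← Finset.sum_Ico_add (fun x : ℕ => ((x:ℕ):ℝ) ^ q) 1 m 1]
          exact Finset.sum_congr rfl fun x _ => by rw [Nat.add_comm]
      _ ≤ _ := this
    have h3 : (0:ℝ) ≤ (m:ℝ)^q := Real.rpow_nonneg (Nat.cast_nonneg m) q
    linarith

theorem int_rpow {q : ℝ} (hq : -1 < q) (m : ℕ) :
    (∫ x in ((1:ℕ):ℝ)..((m:ℕ):ℝ), x ^ q) = ((m:ℝ) ^ (q+1) - 1) / (q+1) := by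
  rw [integral_rpow (Or.inl hq)]
  norm_num

theorem int_inv {m : ℕ} (hm : 1 ≤ m) :
    (∫ x in ((1:ℕ):ℝ)..((m:ℕ):ℝ), x ^ (-1:ℝ)) = Real.log m := by
  have hm1 : (1:ℝ) ≤ (m:ℝ) := by exact_mod_cast hm
  have : ∀ x ∈ Set.uIcc ((1:ℕ):ℝ) ((m:ℕ):ℝ), x ^ (-1:ℝ) = x⁻¹ := by
    intro x _; exact Real.rpow_neg_one x
  rw [intervalIntegral.integral_congr this]
  rw [integral_inv (by
    rw [Set.uIcc_of_le (by exact_mod_cast hm)]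
    intro h
    rw [Set.mem_Icc] at h
    norm_num at h)]
  norm_num

theorem Th_F_gt {q : ℝ} (hq : -1 < q) : Th (F q) (P (q+1) 0) := by
  have ht : (0:ℝ) < q + 1 := by linarith
  refine ⟨1/(2*(q+1)), 2 + 1/(q+1), by positivity, ?_⟩
  have hev2 : ∀ᶠ m : ℕ in Filter.atTop, (2:ℝ) ≤ (m:ℝ) ^ (q+1) :=
    ((tendsto_rpow_atTop ht).comp tendsto_natCast_atTop_atTop).eventually_ge_atTop 2
  filter_upwards [hev2, Filter.eventually_ge_atTop 2] with m hm2 hm2'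
  have hm1 : 1 ≤ m := by omega
  have hm1' : (1:ℝ) ≤ (m:ℝ) := by exact_mod_cast hm1
  have hP : P (q+1) 0 m = (m:ℝ) ^ (q+1) := P_zero_eq _ _
  have hPpos : (0:ℝ) < (m:ℝ) ^ (q+1) := Real.rpow_pos_of_pos (by linarith) _
  rw [hP]
  refine ⟨hPpos, ?_, ?_⟩
  · have h1 : ((m:ℝ) ^ (q+1) - 1) / (q+1) ≤ F q m := by
      rw [← int_rpow hq m]; exact F_int_le q hm1
    have h2 : 1/(2*(q+1)) * (m:ℝ)^(q+1) ≤ ((m:ℝ) ^ (q+1) - 1) / (q+1) := by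
      rw [le_div_iff₀ (by linarith : (0:ℝ) < q+1)]
      have he : 1/(2*(q+1)) * (m:ℝ)^(q+1) * (q+1) = (m:ℝ)^(q+1)/2 := by
        field_simp
      rw [he]; linarith
    linarith
  · have h1 : F q m ≤ 1 + (m:ℝ)^q + ((m:ℝ) ^ (q+1) - 1) / (q+1) := by
      rw [← int_rpow hq m]; exact F_le_int q hm1
    have h2 : (1:ℝ) ≤ (m:ℝ)^(q+1) := Real.one_le_rpow hm1' ht.le
    have h3 : (m:ℝ)^q ≤ (m:ℝ)^(q+1) := Real.rpow_le_rpow_of_exponent_le hm1' (by linarith)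
    have h4 : ((m:ℝ) ^ (q+1) - 1) / (q+1) ≤ 1/(q+1) * (m:ℝ)^(q+1) := by
      rw [div_le_iff₀ (by linarith : (0:ℝ) < q+1)]
      have he : 1/(q+1) * (m:ℝ)^(q+1) * (q+1) = (m:ℝ)^(q+1) := by
        field_simp
      rw [he]; linarith
    have hre : (2 + 1/(q+1)) * (m:ℝ)^(q+1) = (m:ℝ)^(q+1) + (m:ℝ)^(q+1) + 1/(q+1) * (m:ℝ)^(q+1) := by
      ring
    rw [hre]; linarith

theorem Th_F_one : Th (F (-1)) (P 0 1) := by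
  refine ⟨1, 3, one_pos, ?_⟩
  filter_upwards [Filter.eventually_ge_atTop 3] with m hm3
  have hm1 : 1 ≤ m := by omega
  have hm3' : (3:ℝ) ≤ (m:ℝ) := by exact_mod_cast hm3
  have hlog1 : (1:ℝ) ≤ Real.log m := by
    calc (1:ℝ) = Real.log (Real.exp 1) := (Real.log_exp 1).symm
    _ ≤ Real.log m := Real.log_le_log (Real.exp_pos 1) (by
        have := Real.exp_one_lt_d9; linarith)
  have hP : P 0 1 m = Real.log m := by rw [P, Real.rpow_zero, Real.rpow_one, one_mul]
  rw [hP]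
  have h1 : Real.log m ≤ F (-1) m := by
    rw [← int_inv hm1]; exact F_int_le (-1) hm1
  have h2 : F (-1) m ≤ 1 + (m:ℝ)^(-1:ℝ) + Real.log m := by
    rw [← int_inv hm1]; exact F_le_int (-1) hm1
  have h3 : (m:ℝ)^(-1:ℝ) ≤ 1 := by
    rw [Real.rpow_neg_one]
    exact inv_le_one_of_one_le₀ (by linarith)
  exact ⟨by linarith, by linarith, by linarith⟩

theorem Th_F_lt {q : ℝ} (hq : q < -1) : Th (F q) (P 0 0) := by
  refine ⟨1, ∑' n : ℕ, (n:ℝ)^q, one_pos, ?_⟩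
  filter_upwards [Filter.eventually_ge_atTop 1] with m hm1
  have hP : P 0 0 m = 1 := by rw [P, Real.rpow_zero, Real.rpow_zero, one_mul]
  rw [hP]
  refine ⟨one_pos, ?_, ?_⟩
  · rw [mul_one]
    calc (1:ℝ) = ((1:ℕ):ℝ)^q := by rw [Nat.cast_one, Real.one_rpow]
    _ ≤ F q m := Finset.single_le_sum (f := fun l : ℕ => ((l:ℕ):ℝ)^q)
        (fun l _ => Real.rpow_nonneg (Nat.cast_nonneg l) q)
        (Finset.mem_Icc.2 ⟨le_rfl, hm1⟩)
  · rw [mul_one]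
    exact Summable.sum_le_tsum _ (fun l _ => Real.rpow_nonneg (Nat.cast_nonneg l) q)
      (Real.summable_nat_rpow.2 hq)

/-- log-weighted power sum. -/
noncomputable def FL (q : ℝ) (m : ℕ) : ℝ := ∑ l ∈ Finset.Icc 1 m, (l : ℝ) ^ q * Real.log l

/-- inverse-log-weighted power sum. -/
noncomputable def FIL (q : ℝ) (m : ℕ) : ℝ := ∑ l ∈ Finset.Icc 1 m, (l : ℝ) ^ q * (Real.log l)⁻¹

theorem FL_term_nonneg (q : ℝ) {l : ℕ} (hl : l ∈ Finset.Icc 1 m) : 0 ≤ (l:ℝ)^q * Real.log l := by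
  have h1 : 1 ≤ l := (Finset.mem_Icc.1 hl).1
  exact mul_nonneg (Real.rpow_nonneg (Nat.cast_nonneg l) q)
    (Real.log_nonneg (by exact_mod_cast h1))

theorem FIL_term_nonneg (q : ℝ) (l : ℕ) : 0 ≤ (l:ℝ)^q * (Real.log l)⁻¹ := by
  rcases le_or_gt l 1 with h | h
  · interval_cases l <;> simp
  · exact mul_nonneg (Real.rpow_nonneg (Nat.cast_nonneg l) q)
      (inv_nonneg.2 (Real.log_nonneg (by exact_mod_cast h.le)))

theorem log_ge_one {m : ℕ} (hm : 3 ≤ m) : (1:ℝ) ≤ Real.log m := by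
  have hm3' : (3:ℝ) ≤ (m:ℝ) := by exact_mod_cast hm
  calc (1:ℝ) = Real.log (Real.exp 1) := (Real.log_exp 1).symm
  _ ≤ Real.log m := Real.log_le_log (Real.exp_pos 1) (by
      have := Real.exp_one_lt_d9; linarith)

/-- M4: `Σ l^q log l ~ m^{q+1} log m` for `-1 < q ≤ 0`. -/
theorem Th_FL_gt {q : ℝ} (hq : -1 < q) (hq0 : q ≤ 0) : Th (FL q) (P (q+1) 1) := by
  obtain ⟨c₁', c₂', hc₁', hc₂', hev'⟩ := (Th_F_gt hq).c₂_pos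
  refine ⟨1/4, c₂', by norm_num, ?_⟩
  filter_upwards [hev', Filter.eventually_ge_atTop 4] with m hF hm4
  have hm1 : 1 ≤ m := by omega
  have hm0 : (0:ℝ) < m := by positivity
  have hm4' : (4:ℝ) ≤ (m:ℝ) := by exact_mod_cast hm4
  have hlog2 : Real.log m ≥ 2 * Real.log 2 := by
    have he : 2 * Real.log 2 = Real.log 4 := by
      rw [show (4:ℝ) = 2^(2:ℕ) by norm_num, Real.log_pow]; push_cast; ring
    rw [he]
    exact Real.log_le_log (by norm_num) hm4'
  have hlogm : (0:ℝ) < Real.log m := lt_of_lt_of_le (by positivity : (0:ℝ) < 2 * Real.log 2) hlog2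
  have hPpos : 0 < P (q+1) 1 m := P_pos (by omega)
  refine ⟨hPpos, ?_, ?_⟩
  · -- lower bound
    have hsub : Finset.Ioc (m/2) m ⊆ Finset.Icc 1 m := by
      intro x hx
      rw [Finset.mem_Ioc] at hx
      rw [Finset.mem_Icc]
      omega
    have hterm : ∀ l ∈ Finset.Ioc (m/2) m,
        (m:ℝ)^q * (Real.log m / 2) ≤ (l:ℝ)^q * Real.log l := by
      intro l hl
      rw [Finset.mem_Ioc] at hl
      have hl0 : (0:ℝ) < l := by
        have : 1 ≤ l := by omega
        exact_mod_cast this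
      have h1 : (m:ℝ)^q ≤ (l:ℝ)^q :=
        Real.rpow_le_rpow_of_nonpos hl0 (by exact_mod_cast hl.2) hq0
      have h2 : Real.log m / 2 ≤ Real.log l := by
        have hl2 : (m:ℝ)/2 ≤ (l:ℝ) := by
          have := hl.1
          have hcast : (m/2 : ℕ) < l := this
          have h3 : ((m/2 : ℕ):ℝ) + 1 ≤ (l:ℝ) := by exact_mod_cast hcast
          have h4 : (m:ℝ)/2 - 1 ≤ ((m/2:ℕ):ℝ) := by
            have : m ≤ 2 * (m/2) + 1 := by omega
            have h5 : (m:ℝ) ≤ 2 * ((m/2:ℕ):ℝ) + 1 := by exact_mod_cast this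
            linarith
          linarith
        calc Real.log m / 2 ≤ Real.log m - Real.log 2 := by linarith
        _ = Real.log ((m:ℝ)/2) := (Real.log_div hm0.ne' (by norm_num)).symm
        _ ≤ Real.log l := Real.log_le_log (by linarith) hl2
      calc (m:ℝ)^q * (Real.log m / 2) ≤ (l:ℝ)^q * (Real.log m / 2) := by
            apply mul_le_mul_of_nonneg_right h1 (by linarith)
      _ ≤ (l:ℝ)^q * Real.log l := by
            apply mul_le_mul_of_nonneg_left h2 (Real.rpow_nonneg hl0.le q)
    have hcard : (Finset.Ioc (m/2) m).card = m - m/2 := by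
      rw [Nat.card_Ioc]
    have hsum : ((m - m/2 : ℕ):ℝ) * ((m:ℝ)^q * (Real.log m / 2)) ≤ FL q m := by
      calc ((m - m/2 : ℕ):ℝ) * ((m:ℝ)^q * (Real.log m / 2))
          = (Finset.Ioc (m/2) m).card • ((m:ℝ)^q * (Real.log m / 2)) := by
            rw [hcard, nsmul_eq_mul]
      _ ≤ ∑ l ∈ Finset.Ioc (m/2) m, (l:ℝ)^q * Real.log l :=
            Finset.card_nsmul_le_sum _ _ _ hterm
      _ ≤ FL q m := Finset.sum_le_sum_of_subset_of_nonneg hsub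
            (fun l hl _ => FL_term_nonneg q hl)
    have hhalf : (m:ℝ)/2 ≤ ((m - m/2 : ℕ):ℝ) := by
      have h1 : m/2 ≤ m := Nat.div_le_self m 2
      have h2 : ((m - m/2:ℕ):ℝ) = (m:ℝ) - ((m/2:ℕ):ℝ) := by
        push_cast [Nat.cast_sub h1]; ring
      have h3 : ((m/2:ℕ):ℝ) ≤ (m:ℝ)/2 := by
        rw [le_div_iff₀ (by norm_num : (0:ℝ) < 2)]
        exact_mod_cast Nat.div_mul_le_self m 2
      linarith
    have hP : P (q+1) 1 m = (m:ℝ)^(q+1) * Real.log m := P_one_eq _ _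
    rw [hP]
    have hrw : (m:ℝ)^(q+1) = (m:ℝ)^q * (m:ℝ) := by
      rw [Real.rpow_add hm0, Real.rpow_one]
    have hrq : (0:ℝ) ≤ (m:ℝ)^q := Real.rpow_nonneg hm0.le q
    calc 1/4 * ((m:ℝ)^(q+1) * Real.log m) = (m:ℝ)/2 * ((m:ℝ)^q * (Real.log m / 2)) := by
          rw [hrw]; ring
    _ ≤ ((m - m/2 : ℕ):ℝ) * ((m:ℝ)^q * (Real.log m / 2)) := by
          apply mul_le_mul_of_nonneg_right hhalf
          positivity
    _ ≤ FL q m := hsum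
  · -- upper bound
    have h1 : FL q m ≤ Real.log m * F q m := by
      rw [F, Finset.mul_sum, FL]
      apply Finset.sum_le_sum
      intro l hl
      have h2 : 1 ≤ l := (Finset.mem_Icc.1 hl).1
      have h3 : Real.log l ≤ Real.log m := by
        apply Real.log_le_log (by exact_mod_cast h2)
        exact_mod_cast (Finset.mem_Icc.1 hl).2
      calc (l:ℝ)^q * Real.log l ≤ (l:ℝ)^q * Real.log m :=
            mul_le_mul_of_nonneg_left h3 (Real.rpow_nonneg (Nat.cast_nonneg l) q)
      _ = Real.log m * (l:ℝ)^q := by ring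
    obtain ⟨hFpos, hF1, hF2⟩ := hF
    rw [P_zero_eq] at hF1 hF2
    calc FL q m ≤ Real.log m * F q m := h1
    _ ≤ Real.log m * (c₂' * (m:ℝ)^(q+1)) :=
          mul_le_mul_of_nonneg_left hF2 hlogm.le
    _ = c₂' * P (q+1) 1 m := by rw [P_one_eq]; ring

theorem P_two_eq (m : ℕ) : P 0 2 m = Real.log m * Real.log m := by
  rw [P, Real.rpow_zero, one_mul, show (2:ℝ) = ((2:ℕ):ℝ) by norm_num,
    Real.rpow_natCast, sq]

/-- Sum of `1/l` over `Icc s m` is at least `log m - log s`. -/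
theorem sum_inv_ge {s m : ℕ} (hs1 : 1 ≤ s) (hsm : s ≤ m) :
    Real.log m - Real.log s ≤ ∑ l ∈ Finset.Icc s m, ((l:ℝ))⁻¹ := by
  have hs0 : (0:ℝ) < s := by exact_mod_cast hs1
  have hanti : AntitoneOn (fun x : ℝ => x⁻¹) (Set.Icc ((s:ℕ):ℝ) ((m:ℕ):ℝ)) := by
    intro x hx y hy hxy
    have hx0 : (0:ℝ) < x := lt_of_lt_of_le hs0 hx.1
    exact inv_anti₀ hx0 hxy
  have hint := hanti.integral_le_sum_Ico hsm
  have hI : (∫ x in ((s:ℕ):ℝ)..((m:ℕ):ℝ), x⁻¹) = Real.log m - Real.log s := by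
    rw [integral_inv (by
      rw [Set.uIcc_of_le (by exact_mod_cast hsm)]
      intro h
      rw [Set.mem_Icc] at h
      have := h.1
      norm_num at this
      linarith)]
    rw [Real.log_div (ne_of_gt (lt_of_lt_of_le hs0 (by exact_mod_cast hsm))) (ne_of_gt hs0)]
  calc Real.log m - Real.log s = ∫ x in ((s:ℕ):ℝ)..((m:ℕ):ℝ), x⁻¹ := hI.symm
  _ ≤ ∑ x ∈ Finset.Ico s m, ((x:ℕ):ℝ)⁻¹ := hint
  _ ≤ ∑ l ∈ Finset.Icc s m, ((l:ℕ):ℝ)⁻¹ := Finset.sum_le_sum_of_subset_of_nonneg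
      (by rw [← Finset.Ico_add_one_right_eq_Icc]; exact Finset.Ico_subset_Ico_right (by omega))
      (fun l _ _ => by positivity)

/-- M5: `Σ (log l)/l ~ (log m)²`. -/
theorem Th_FL_one : Th (FL (-1)) (P 0 2) := by
  obtain ⟨c₁', c₂', hc₁', hc₂', hev'⟩ := Th_F_one.c₂_pos
  refine ⟨1/8, c₂', by norm_num, ?_⟩
  filter_upwards [hev', Filter.eventually_ge_atTop 16] with m hF hm16
  have hm1 : 1 ≤ m := by omega
  have hm0 : (0:ℝ) < m := by positivity
  have hm16' : (16:ℝ) ≤ (m:ℝ) := by exact_mod_cast hm16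
  have hlog4 : 4 * Real.log 2 ≤ Real.log m := by
    have he : 4 * Real.log 2 = Real.log 16 := by
      rw [show (16:ℝ) = 2^(4:ℕ) by norm_num, Real.log_pow]; push_cast; ring
    rw [he]; exact Real.log_le_log (by norm_num) hm16'
  have hl2 : (0:ℝ) < Real.log 2 := Real.log_pos (by norm_num)
  have hlogm : (0:ℝ) < Real.log m := by linarith
  refine ⟨P_pos (by omega), ?_, ?_⟩
  · -- lower bound
    set s : ℕ := Nat.sqrt m + 1 with hs
    have hs1 : 1 ≤ s := by omega
    have hsm : s ≤ m := by
      have := Nat.sqrt_lt_self (show 1 < m by omega)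
      omega
    have hsqrt_lt : Real.sqrt m < s := by
      rw [Real.sqrt_lt' (by positivity : (0:ℝ) < (s:ℕ))]
      have := Nat.lt_succ_sqrt' m
      exact_mod_cast this
    have hs_le : (s:ℝ) ≤ 2 * Real.sqrt m := by
      have h1 : ((Nat.sqrt m : ℕ):ℝ) ≤ Real.sqrt m := Real.nat_sqrt_le_real_sqrt
      have h2 : (1:ℝ) ≤ Real.sqrt m := by
        rw [show (1:ℝ) = Real.sqrt 1 by rw [Real.sqrt_one]]
        exact Real.sqrt_le_sqrt (by linarith)
      have : (s:ℝ) = ((Nat.sqrt m : ℕ):ℝ) + 1 := by push_cast [hs]; ring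
      linarith
    have hlog_s_ge : Real.log m / 2 ≤ Real.log s := by
      rw [show Real.log (m:ℝ) / 2 = Real.log (Real.sqrt m) from
        (Real.log_sqrt hm0.le).symm]
      exact Real.log_le_log (Real.sqrt_pos.2 hm0) hsqrt_lt.le
    have hlog_s_le : Real.log s ≤ Real.log 2 + Real.log m / 2 := by
      calc Real.log s ≤ Real.log (2 * Real.sqrt m) :=
        Real.log_le_log (by positivity) hs_le
      _ = Real.log 2 + Real.log (Real.sqrt m) :=
        Real.log_mul (by norm_num) (by positivity)
      _ = Real.log 2 + Real.log m / 2 := by rw [Real.log_sqrt hm0.le]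
    have hsum_inv : Real.log m / 4 ≤ ∑ l ∈ Finset.Icc s m, ((l:ℝ))⁻¹ := by
      have := sum_inv_ge hs1 hsm
      have h2 : Real.log m / 4 ≤ Real.log m - Real.log s := by
        have : Real.log m - Real.log s ≥ Real.log m / 2 - Real.log 2 := by linarith
        linarith
      linarith
    have hterm : ∀ l ∈ Finset.Icc s m,
        (Real.log m / 2) * (l:ℝ)⁻¹ ≤ (l:ℝ)^(-1:ℝ) * Real.log l := by
      intro l hl
      rw [Finset.mem_Icc] at hl
      have hl0 : (0:ℝ) < l := by
        have : 1 ≤ l := le_trans hs1 hl.1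
        exact_mod_cast this
      have h1 : Real.log m / 2 ≤ Real.log l := by
        calc Real.log m / 2 ≤ Real.log s := hlog_s_ge
        _ ≤ Real.log l := Real.log_le_log (by positivity) (by exact_mod_cast hl.1)
      rw [Real.rpow_neg_one]
      calc (Real.log m / 2) * (l:ℝ)⁻¹ ≤ Real.log l * (l:ℝ)⁻¹ :=
        mul_le_mul_of_nonneg_right h1 (by positivity)
      _ = (l:ℝ)⁻¹ * Real.log l := by ring
    have hsum : (Real.log m / 2) * (Real.log m / 4) ≤ FL (-1) m := by
      calc (Real.log m / 2) * (Real.log m / 4)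
          ≤ (Real.log m / 2) * ∑ l ∈ Finset.Icc s m, ((l:ℝ))⁻¹ :=
            mul_le_mul_of_nonneg_left hsum_inv (by linarith)
      _ = ∑ l ∈ Finset.Icc s m, (Real.log m / 2) * (l:ℝ)⁻¹ := by
            rw [Finset.mul_sum]
      _ ≤ ∑ l ∈ Finset.Icc s m, (l:ℝ)^(-1:ℝ) * Real.log l :=
            Finset.sum_le_sum hterm
      _ ≤ FL (-1) m := Finset.sum_le_sum_of_subset_of_nonneg
            (Finset.Icc_subset_Icc_left hs1)
            (fun l hl _ => FL_term_nonneg (-1) hl)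
    rw [P_two_eq]
    calc 1/8 * (Real.log m * Real.log m) = (Real.log m / 2) * (Real.log m / 4) := by ring
    _ ≤ FL (-1) m := hsum
  · -- upper bound
    have h1 : FL (-1) m ≤ Real.log m * F (-1) m := by
      rw [F, Finset.mul_sum, FL]
      apply Finset.sum_le_sum
      intro l hl
      have h2 : 1 ≤ l := (Finset.mem_Icc.1 hl).1
      have h3 : Real.log l ≤ Real.log m := by
        apply Real.log_le_log (by exact_mod_cast h2)
        exact_mod_cast (Finset.mem_Icc.1 hl).2
      calc (l:ℝ)^(-1:ℝ) * Real.log l ≤ (l:ℝ)^(-1:ℝ) * Real.log m :=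
            mul_le_mul_of_nonneg_left h3 (Real.rpow_nonneg (Nat.cast_nonneg l) _)
      _ = Real.log m * (l:ℝ)^(-1:ℝ) := by ring
    obtain ⟨hFpos, hF1, hF2⟩ := hF
    have hP01 : P 0 1 m = Real.log m := by rw [P, Real.rpow_zero, Real.rpow_one, one_mul]
    rw [hP01] at hF2
    -- need c₂' with F(-1) ≤ 3 log m : from Th_F_one we got c₂' but c₂' arbitrary; use hF2
    calc FL (-1) m ≤ Real.log m * F (-1) m := h1
    _ ≤ Real.log m * (c₂' * Real.log m) := mul_le_mul_of_nonneg_left hF2 hlogm.le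
    _ = c₂' * P 0 2 m := by rw [P_two_eq]; ring

/-- M6: `Σ l^q log l = Θ(1)` for `q < -1`. -/
theorem Th_FL_lt {q : ℝ} (hq : q < -1) : Th (FL q) (P 0 0) := by
  set ε : ℝ := (-1 - q)/2 with hε
  have hεpos : 0 < ε := by rw [hε]; linarith
  have hsum : Summable (fun l : ℕ => (l:ℝ)^(q + ε)) :=
    Real.summable_nat_rpow.2 (by rw [hε]; linarith)
  refine ⟨(2:ℝ)^q * Real.log 2, (1/ε) * ∑' l : ℕ, (l:ℝ)^(q+ε), 
    mul_pos (Real.rpow_pos_of_pos two_pos q) (Real.log_pos (by norm_num)), ?_⟩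
  filter_upwards [Filter.eventually_ge_atTop 2] with m hm2
  have hP : P 0 0 m = 1 := by rw [P, Real.rpow_zero, Real.rpow_zero, one_mul]
  rw [hP, mul_one, mul_one]
  refine ⟨one_pos, ?_, ?_⟩
  · calc (2:ℝ)^q * Real.log 2 = ((2:ℕ):ℝ)^q * Real.log ((2:ℕ):ℝ) := by norm_num
    _ ≤ FL q m := Finset.single_le_sum (f := fun l : ℕ => (l:ℝ)^q * Real.log l)
        (fun l hl => FL_term_nonneg q hl) (Finset.mem_Icc.2 ⟨by omega, hm2⟩)
  · have hterm : ∀ l ∈ Finset.Icc 1 m, (l:ℝ)^q * Real.log l ≤ (1/ε) * (l:ℝ)^(q+ε) := by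
      intro l hl
      have hl1 : 1 ≤ l := (Finset.mem_Icc.1 hl).1
      have hl1' : (1:ℝ) ≤ l := by exact_mod_cast hl1
      have hlog : Real.log l ≤ (l:ℝ)^ε / ε := log_le_rpow_div hl1' hεpos
      calc (l:ℝ)^q * Real.log l ≤ (l:ℝ)^q * ((l:ℝ)^ε / ε) :=
            mul_le_mul_of_nonneg_left hlog (Real.rpow_nonneg (by linarith) q)
      _ = (1/ε) * ((l:ℝ)^q * (l:ℝ)^ε) := by ring
      _ = (1/ε) * (l:ℝ)^(q+ε) := by rw [← Real.rpow_add (by linarith : (0:ℝ) < l)]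
    calc FL q m ≤ ∑ l ∈ Finset.Icc 1 m, (1/ε) * (l:ℝ)^(q+ε) := Finset.sum_le_sum hterm
    _ = (1/ε) * ∑ l ∈ Finset.Icc 1 m, (l:ℝ)^(q+ε) := by rw [Finset.mul_sum]
    _ ≤ (1/ε) * ∑' l : ℕ, (l:ℝ)^(q+ε) := by
        apply mul_le_mul_of_nonneg_left _ (by positivity)
        exact Summable.sum_le_tsum _ (fun l _ => Real.rpow_nonneg (Nat.cast_nonneg l) _) hsum

/-- M8: `Σ l^q / log l = Θ(1)` for `q < -1`. -/
theorem Th_FIL_lt {q : ℝ} (hq : q < -1) : Th (FIL q) (P 0 0) := by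
  have hsum : Summable (fun l : ℕ => (l:ℝ)^q) := Real.summable_nat_rpow.2 hq
  have hl2 : (0:ℝ) < Real.log 2 := Real.log_pos (by norm_num)
  refine ⟨(2:ℝ)^q * (Real.log 2)⁻¹, (Real.log 2)⁻¹ * ∑' l : ℕ, (l:ℝ)^q,
    mul_pos (Real.rpow_pos_of_pos two_pos q) (by positivity), ?_⟩
  filter_upwards [Filter.eventually_ge_atTop 2] with m hm2
  have hP : P 0 0 m = 1 := by rw [P, Real.rpow_zero, Real.rpow_zero, one_mul]
  rw [hP, mul_one, mul_one]
  refine ⟨one_pos, ?_, ?_⟩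
  · calc (2:ℝ)^q * (Real.log 2)⁻¹ = ((2:ℕ):ℝ)^q * (Real.log ((2:ℕ):ℝ))⁻¹ := by norm_num
    _ ≤ FIL q m := Finset.single_le_sum (f := fun l : ℕ => (l:ℝ)^q * (Real.log l)⁻¹)
        (fun l _ => FIL_term_nonneg q l) (Finset.mem_Icc.2 ⟨by omega, hm2⟩)
  · have hterm : ∀ l ∈ Finset.Icc 1 m, (l:ℝ)^q * (Real.log l)⁻¹ ≤ (Real.log 2)⁻¹ * (l:ℝ)^q := by
      intro l hl
      have hl1 : 1 ≤ l := (Finset.mem_Icc.1 hl).1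
      rcases eq_or_lt_of_le hl1 with h | h
      · rw [← h]
        simp [Real.log_one]
        positivity
      · have h2 : 2 ≤ l := h
        have hlogl : Real.log 2 ≤ Real.log l :=
          Real.log_le_log (by norm_num) (by exact_mod_cast h2)
        calc (l:ℝ)^q * (Real.log l)⁻¹ ≤ (l:ℝ)^q * (Real.log 2)⁻¹ :=
              mul_le_mul_of_nonneg_left (inv_anti₀ hl2 hlogl)
                (Real.rpow_nonneg (Nat.cast_nonneg l) q)
        _ = (Real.log 2)⁻¹ * (l:ℝ)^q := by ring
    calc FIL q m ≤ ∑ l ∈ Finset.Icc 1 m, (Real.log 2)⁻¹ * (l:ℝ)^q := Finset.sum_le_sum hterm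
    _ = (Real.log 2)⁻¹ * ∑ l ∈ Finset.Icc 1 m, (l:ℝ)^q := by rw [Finset.mul_sum]
    _ ≤ (Real.log 2)⁻¹ * ∑' l : ℕ, (l:ℝ)^q := by
        apply mul_le_mul_of_nonneg_left _ (by positivity)
        exact Summable.sum_le_tsum _ (fun l _ => Real.rpow_nonneg (Nat.cast_nonneg l) _) hsum

/-- M7: `Σ l^q / log l ~ m^{q+1}/log m` for `q > -1`. -/
theorem Th_FIL_gt {q : ℝ} (hq : -1 < q) : Th (FIL q) (P (q+1) (-1)) := by
  have ht : (0:ℝ) < q + 1 := by linarith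
  obtain ⟨c₁', c₂', hc₁', hc₂', hev'⟩ := (Th_F_gt hq).c₂_pos
  obtain ⟨N', hN'⟩ := Filter.eventually_atTop.1 hev'
  have hl2 : (0:ℝ) < Real.log 2 := Real.log_pos (by norm_num)
  set A : ℝ := (Real.log 2)⁻¹ * c₂' * (2/(q+1)) + 2 * c₂' with hA
  refine ⟨c₁'/2, A, by positivity, ?_⟩
  have hev2 : ∀ᶠ m : ℕ in Filter.atTop, (2/c₁') ≤ (m:ℝ) ^ (q+1) :=
    ((tendsto_rpow_atTop ht).comp tendsto_natCast_atTop_atTop).eventually_ge_atTop _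
  filter_upwards [hev2, Filter.eventually_ge_atTop (max (N'*N') (max N' 16))] with m hbig hm
  have hmN2 : N'*N' ≤ m := le_trans (le_max_left _ _) hm
  have hmN : N' ≤ m := le_trans (le_trans (le_max_left _ _) (le_max_right _ _)) hm
  have hm16 : 16 ≤ m := le_trans (le_trans (le_max_right _ _) (le_max_right _ _)) hm
  have hm1 : 1 ≤ m := by omega
  have hm0 : (0:ℝ) < m := by positivity
  have hm1' : (1:ℝ) ≤ m := by exact_mod_cast hm1
  have hlogm : (0:ℝ) < Real.log m := Real.log_pos (by exact_mod_cast (by omega : 2 ≤ m) |>.trans_lt' one_lt_two)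
  have hPm : P (q+1) (-1) m = (m:ℝ)^(q+1) * (Real.log m)⁻¹ := P_negone_eq _ hm1
  have hPpos : 0 < P (q+1) (-1) m := P_pos (by omega)
  obtain ⟨_, hF1, hF2⟩ := hN' m hmN
  rw [P_zero_eq] at hF1 hF2
  have hsplit1 : F q m = 1 + ∑ l ∈ Finset.Icc 2 m, (l:ℝ)^q := by
    rw [F, show Finset.Icc 1 m = insert 1 (Finset.Icc 2 m) by
      ext x; simp [Finset.mem_insert, Finset.mem_Icc]; omega]
    rw [Finset.sum_insert (by simp)]
    norm_num
  refine ⟨hPpos, ?_, ?_⟩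
  · -- lower bound
    have hterm : ∀ l ∈ Finset.Icc 2 m, (Real.log m)⁻¹ * (l:ℝ)^q ≤ (l:ℝ)^q * (Real.log l)⁻¹ := by
      intro l hl
      rw [Finset.mem_Icc] at hl
      have hll : Real.log l ≤ Real.log m := by
        apply Real.log_le_log (by exact_mod_cast (by omega : 0 < l))
        exact_mod_cast hl.2
      calc (Real.log m)⁻¹ * (l:ℝ)^q ≤ (Real.log l)⁻¹ * (l:ℝ)^q := by
            apply mul_le_mul_of_nonneg_right _ (Real.rpow_nonneg (Nat.cast_nonneg l) q)
            exact inv_anti₀ (Real.log_pos (by exact_mod_cast hl.1 |>.trans_lt' one_lt_two)) hll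
      _ = (l:ℝ)^q * (Real.log l)⁻¹ := by ring
    have h1 : (Real.log m)⁻¹ * (F q m - 1) ≤ FIL q m := by
      calc (Real.log m)⁻¹ * (F q m - 1)
          = ∑ l ∈ Finset.Icc 2 m, (Real.log m)⁻¹ * (l:ℝ)^q := by
            rw [← Finset.mul_sum]
            congr 1
            linarith [hsplit1]
      _ ≤ ∑ l ∈ Finset.Icc 2 m, (l:ℝ)^q * (Real.log l)⁻¹ := Finset.sum_le_sum hterm
      _ ≤ FIL q m := Finset.sum_le_sum_of_subset_of_nonneg
            (Finset.Icc_subset_Icc_left (by omega))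
            (fun l _ _ => FIL_term_nonneg q l)
    have h2 : c₁'/2 * (m:ℝ)^(q+1) ≤ F q m - 1 := by
      have : 1 ≤ c₁'/2 * (m:ℝ)^(q+1) := by
        rw [div_mul_eq_mul_div, le_div_iff₀ (by norm_num : (0:ℝ) < 2)]
        calc (1:ℝ) * 2 = 2 := by ring
        _ = c₁' * (2/c₁') := by field_simp
        _ ≤ c₁' * (m:ℝ)^(q+1) := mul_le_mul_of_nonneg_left hbig hc₁'.le
      linarith
    rw [hPm]
    calc c₁'/2 * ((m:ℝ)^(q+1) * (Real.log m)⁻¹) = (Real.log m)⁻¹ * (c₁'/2 * (m:ℝ)^(q+1)) := by ring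
    _ ≤ (Real.log m)⁻¹ * (F q m - 1) := mul_le_mul_of_nonneg_left h2 (by positivity)
    _ ≤ FIL q m := h1
  · -- upper bound
    set s : ℕ := Nat.sqrt m with hs
    have hsm : s ≤ m := Nat.sqrt_le_self m
    have hsN : N' ≤ s := by
      have := Nat.sqrt_le_sqrt hmN2
      rwa [Nat.sqrt_eq N'] at this
    have hs1 : 1 ≤ s := by
      have : 1 ≤ Nat.sqrt 16 := by norm_num
      have h16 := Nat.sqrt_le_sqrt hm16
      omega
    have hsplit : FIL q m = (∑ l ∈ Finset.Icc 1 s, (l:ℝ)^q * (Real.log l)⁻¹)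
        + ∑ l ∈ Finset.Ioc s m, (l:ℝ)^q * (Real.log l)⁻¹ := by
      rw [FIL, show Finset.Icc 1 m = Finset.Ioc 0 m from Finset.Icc_add_one_left_eq_Ioc 0 m,
        show Finset.Icc 1 s = Finset.Ioc 0 s from Finset.Icc_add_one_left_eq_Ioc 0 s,
        Finset.sum_Ioc_consecutive _ (Nat.zero_le s) hsm]
    obtain ⟨_, hFs1, hFs2⟩ := hN' s hsN
    rw [P_zero_eq] at hFs2
    -- Part 1
    have hpart1 : (∑ l ∈ Finset.Icc 1 s, (l:ℝ)^q * (Real.log l)⁻¹)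
        ≤ (Real.log 2)⁻¹ * (c₂' * (s:ℝ)^(q+1)) := by
      calc (∑ l ∈ Finset.Icc 1 s, (l:ℝ)^q * (Real.log l)⁻¹)
          ≤ ∑ l ∈ Finset.Icc 1 s, (Real.log 2)⁻¹ * (l:ℝ)^q := by
            apply Finset.sum_le_sum
            intro l hl
            have hl1 : 1 ≤ l := (Finset.mem_Icc.1 hl).1
            rcases eq_or_lt_of_le hl1 with h | h
            · rw [← h]; simp [Real.log_one]; positivity
            · have hlogl : Real.log 2 ≤ Real.log l :=
                Real.log_le_log (by norm_num) (by exact_mod_cast (h : 2 ≤ l))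
              calc (l:ℝ)^q * (Real.log l)⁻¹ ≤ (l:ℝ)^q * (Real.log 2)⁻¹ :=
                    mul_le_mul_of_nonneg_left (inv_anti₀ hl2 hlogl)
                      (Real.rpow_nonneg (Nat.cast_nonneg l) q)
              _ = (Real.log 2)⁻¹ * (l:ℝ)^q := by ring
      _ = (Real.log 2)⁻¹ * F q s := by rw [F, Finset.mul_sum]
      _ ≤ (Real.log 2)⁻¹ * (c₂' * (s:ℝ)^(q+1)) :=
            mul_le_mul_of_nonneg_left hFs2 (by positivity)
    have hs_sqrt : (s:ℝ) ≤ Real.sqrt m := Real.nat_sqrt_le_real_sqrt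
    have hsq : (s:ℝ)^(q+1) ≤ (m:ℝ)^((q+1)/2) := by
      calc (s:ℝ)^(q+1) ≤ (Real.sqrt m)^(q+1) :=
            Real.rpow_le_rpow (Nat.cast_nonneg s) hs_sqrt ht.le
      _ = (m:ℝ)^((q+1)/2) := by
            rw [Real.sqrt_eq_rpow, ← Real.rpow_mul hm0.le]
            congr 1; ring
    have hhalf : (m:ℝ)^((q+1)/2) * (m:ℝ)^((q+1)/2) = (m:ℝ)^(q+1) := by
      rw [← Real.rpow_add hm0]; congr 1; ring
    have hlogbound : Real.log m ≤ (2/(q+1)) * (m:ℝ)^((q+1)/2) := by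
      have := log_le_rpow_div hm1' (by linarith : (0:ℝ) < (q+1)/2)
      calc Real.log m ≤ (m:ℝ)^((q+1)/2) / ((q+1)/2) := this
      _ = (2/(q+1)) * (m:ℝ)^((q+1)/2) := by field_simp
    have hkey : (m:ℝ)^((q+1)/2) ≤ (2/(q+1)) * ((m:ℝ)^(q+1) * (Real.log m)⁻¹) := by
      have h1 : (m:ℝ)^((q+1)/2) * Real.log m ≤ (2/(q+1)) * (m:ℝ)^(q+1) := by
        calc (m:ℝ)^((q+1)/2) * Real.log m
            ≤ (m:ℝ)^((q+1)/2) * ((2/(q+1)) * (m:ℝ)^((q+1)/2)) :=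
              mul_le_mul_of_nonneg_left hlogbound (Real.rpow_nonneg hm0.le _)
        _ = (2/(q+1)) * ((m:ℝ)^((q+1)/2) * (m:ℝ)^((q+1)/2)) := by ring
        _ = (2/(q+1)) * (m:ℝ)^(q+1) := by rw [hhalf]
      calc (m:ℝ)^((q+1)/2) = (m:ℝ)^((q+1)/2) * Real.log m * (Real.log m)⁻¹ := by
            field_simp
      _ ≤ (2/(q+1)) * (m:ℝ)^(q+1) * (Real.log m)⁻¹ :=
            mul_le_mul_of_nonneg_right h1 (by positivity)
      _ = (2/(q+1)) * ((m:ℝ)^(q+1) * (Real.log m)⁻¹) := by ring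
    -- Part 2
    have hpart2 : (∑ l ∈ Finset.Ioc s m, (l:ℝ)^q * (Real.log l)⁻¹)
        ≤ 2 * (Real.log m)⁻¹ * (c₂' * (m:ℝ)^(q+1)) := by
      have hterm2 : ∀ l ∈ Finset.Ioc s m, (l:ℝ)^q * (Real.log l)⁻¹
          ≤ 2 * (Real.log m)⁻¹ * (l:ℝ)^q := by
        intro l hl
        rw [Finset.mem_Ioc] at hl
        have hsl : Real.sqrt m < (s:ℝ) + 1 := by
          rw [Real.sqrt_lt' (by positivity)]
          have := Nat.lt_succ_sqrt' m
          push_cast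
          exact_mod_cast this
        have hloglm : Real.log m / 2 ≤ Real.log l := by
          calc Real.log m / 2 = Real.log (Real.sqrt m) := (Real.log_sqrt hm0.le).symm
          _ ≤ Real.log ((s:ℝ)+1) := Real.log_le_log (Real.sqrt_pos.2 hm0) hsl.le
          _ ≤ Real.log l := by
              apply Real.log_le_log (by positivity)
              have : s + 1 ≤ l := hl.1
              exact_mod_cast this
        have hinv : (Real.log l)⁻¹ ≤ 2 * (Real.log m)⁻¹ := by
          have h0 : (0:ℝ) < Real.log m / 2 := by linarith
          calc (Real.log l)⁻¹ ≤ (Real.log m / 2)⁻¹ := inv_anti₀ h0 hloglm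
          _ = 2 * (Real.log m)⁻¹ := by field_simp
        calc (l:ℝ)^q * (Real.log l)⁻¹ ≤ (l:ℝ)^q * (2 * (Real.log m)⁻¹) :=
              mul_le_mul_of_nonneg_left hinv (Real.rpow_nonneg (Nat.cast_nonneg l) q)
        _ = 2 * (Real.log m)⁻¹ * (l:ℝ)^q := by ring
      calc (∑ l ∈ Finset.Ioc s m, (l:ℝ)^q * (Real.log l)⁻¹)
          ≤ ∑ l ∈ Finset.Ioc s m, 2 * (Real.log m)⁻¹ * (l:ℝ)^q := Finset.sum_le_sum hterm2
      _ = 2 * (Real.log m)⁻¹ * ∑ l ∈ Finset.Ioc s m, (l:ℝ)^q := by rw [Finset.mul_sum]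
      _ ≤ 2 * (Real.log m)⁻¹ * F q m := by
            apply mul_le_mul_of_nonneg_left _ (by positivity)
            apply Finset.sum_le_sum_of_subset_of_nonneg
            · intro x hx
              rw [Finset.mem_Ioc] at hx
              rw [Finset.mem_Icc]
              omega
            · exact fun l _ _ => Real.rpow_nonneg (Nat.cast_nonneg l) q
      _ ≤ 2 * (Real.log m)⁻¹ * (c₂' * (m:ℝ)^(q+1)) :=
            mul_le_mul_of_nonneg_left hF2 (by positivity)
    rw [hsplit, hPm]
    calc (∑ l ∈ Finset.Icc 1 s, (l:ℝ)^q * (Real.log l)⁻¹)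
        + (∑ l ∈ Finset.Ioc s m, (l:ℝ)^q * (Real.log l)⁻¹)
        ≤ (Real.log 2)⁻¹ * (c₂' * (m:ℝ)^((q+1)/2))
          + 2 * (Real.log m)⁻¹ * (c₂' * (m:ℝ)^(q+1)) := by
          apply add_le_add _ hpart2
          calc (∑ l ∈ Finset.Icc 1 s, (l:ℝ)^q * (Real.log l)⁻¹)
              ≤ (Real.log 2)⁻¹ * (c₂' * (s:ℝ)^(q+1)) := hpart1
          _ ≤ (Real.log 2)⁻¹ * (c₂' * (m:ℝ)^((q+1)/2)) := by
              apply mul_le_mul_of_nonneg_left _ (by positivity)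
              exact mul_le_mul_of_nonneg_left hsq hc₂'.le
    _ ≤ (Real.log 2)⁻¹ * (c₂' * ((2/(q+1)) * ((m:ℝ)^(q+1) * (Real.log m)⁻¹)))
          + 2 * (Real.log m)⁻¹ * (c₂' * (m:ℝ)^(q+1)) := by
          apply add_le_add _ le_rfl
          apply mul_le_mul_of_nonneg_left _ (by positivity)
          exact mul_le_mul_of_nonneg_left hkey hc₂'.le
    _ = A * ((m:ℝ)^(q+1) * (Real.log m)⁻¹) := by rw [hA]; ring

theorem sum_split (Ff : ℕ → ℝ) {L m : ℕ} (hL : 1 ≤ L) (hLm : L ≤ m) :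
    ∑ l ∈ Finset.Icc 1 m, Ff l =
      (∑ l ∈ Finset.Icc 1 (L-1), Ff l) + ∑ l ∈ Finset.Ioc (L-1) m, Ff l := by
  rw [show Finset.Icc 1 m = Finset.Ioc 0 m by rw [← Finset.Icc_add_one_left_eq_Ioc, zero_add],
    show Finset.Icc 1 (L-1) = Finset.Ioc 0 (L-1) by rw [← Finset.Icc_add_one_left_eq_Ioc, zero_add],
    Finset.sum_Ioc_consecutive Ff (Nat.zero_le (L-1)) (by omega)]

/-- Divergent-sum comparison: if `f ≍ g` pointwise and `Σ g ≍ h → ∞` then `Σ f ≍ h`. -/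
theorem Th_sum_div {f g h : ℕ → ℝ} (hf0 : ∀ l, 0 ≤ f l) (hfg : Th f g)
    (hG : Th (fun m => ∑ l ∈ Finset.Icc 1 m, g l) h)
    (hh : Filter.Tendsto h Filter.atTop Filter.atTop) :
    Th (fun m => ∑ l ∈ Finset.Icc 1 m, f l) h := by
  obtain ⟨c₁, c₂, hc₁, hc₂, hev⟩ := hfg.c₂_pos
  obtain ⟨L₀, hL₀⟩ := Filter.eventually_atTop.1 hev
  set L : ℕ := max L₀ 1 with hLdef
  have hL1 : 1 ≤ L := le_max_right _ _
  set K : ℝ := ∑ l ∈ Finset.Icc 1 (L-1), g l with hK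
  set Kf : ℝ := ∑ l ∈ Finset.Icc 1 (L-1), f l with hKf
  have hKf0 : 0 ≤ Kf := Finset.sum_nonneg fun l _ => hf0 l
  obtain ⟨d₁, d₂, hd₁, hd₂, hev'⟩ := hG.c₂_pos
  refine ⟨c₁ * d₁ / 2, c₂ * d₂ + Kf + c₂ * |K| + 1, by positivity, ?_⟩
  filter_upwards [hev', hh.eventually_ge_atTop (2 * |K| / d₁),
    hh.eventually_ge_atTop 1, Filter.eventually_ge_atTop L] with m hGm hhK hh1 hmL
  obtain ⟨hhm, hG1, hG2⟩ := hGm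
  have hsplitf := sum_split f hL1 hmL
  have hsplitg := sum_split g hL1 hmL
  have hmem : ∀ l ∈ Finset.Ioc (L-1) m, L₀ ≤ l := by
    intro l hl
    rw [Finset.mem_Ioc] at hl
    have : L ≤ l := by omega
    omega
  have hlow : ∀ l ∈ Finset.Ioc (L-1) m, c₁ * g l ≤ f l := fun l hl => (hL₀ l (hmem l hl)).2.1
  have hup : ∀ l ∈ Finset.Ioc (L-1) m, f l ≤ c₂ * g l := fun l hl => (hL₀ l (hmem l hl)).2.2
  have hSG : (∑ l ∈ Finset.Ioc (L-1) m, g l) = (∑ l ∈ Finset.Icc 1 m, g l) - K := by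
    rw [hsplitg]; ring
  refine ⟨hhm, ?_, ?_⟩
  · -- lower bound
    have h1 : c₁ * ((∑ l ∈ Finset.Icc 1 m, g l) - K) ≤ ∑ l ∈ Finset.Icc 1 m, f l := by
      rw [hsplitf, ← hSG]
      have h2 : c₁ * ∑ l ∈ Finset.Ioc (L-1) m, g l ≤ ∑ l ∈ Finset.Ioc (L-1) m, f l := by
        rw [Finset.mul_sum]
        exact Finset.sum_le_sum hlow
      linarith
    have h3 : d₁ * h m - K ≤ (∑ l ∈ Finset.Icc 1 m, g l) - K := by linarith
    have h4 : d₁ / 2 * h m ≤ d₁ * h m - K := by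
      have h5 : K ≤ |K| := le_abs_self K
      have h6 : 2 * |K| / d₁ * d₁ ≤ h m * d₁ := mul_le_mul_of_nonneg_right hhK hd₁.le
      rw [div_mul_cancel₀ _ hd₁.ne'] at h6
      nlinarith
    calc c₁ * d₁ / 2 * h m = c₁ * (d₁ / 2 * h m) := by ring
    _ ≤ c₁ * (d₁ * h m - K) := mul_le_mul_of_nonneg_left (by linarith) hc₁.le
    _ ≤ c₁ * ((∑ l ∈ Finset.Icc 1 m, g l) - K) := mul_le_mul_of_nonneg_left (by linarith) hc₁.le
    _ ≤ ∑ l ∈ Finset.Icc 1 m, f l := h1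
  · -- upper bound
    have h1 : (∑ l ∈ Finset.Icc 1 m, f l) ≤ Kf + c₂ * ((∑ l ∈ Finset.Icc 1 m, g l) - K) := by
      rw [hsplitf, ← hSG]
      have h2 : (∑ l ∈ Finset.Ioc (L-1) m, f l) ≤ c₂ * ∑ l ∈ Finset.Ioc (L-1) m, g l := by
        rw [Finset.mul_sum]
        exact Finset.sum_le_sum hup
      linarith
    have h5 : -K ≤ |K| := neg_le_abs K
    calc (∑ l ∈ Finset.Icc 1 m, f l) ≤ Kf + c₂ * ((∑ l ∈ Finset.Icc 1 m, g l) - K) := h1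
    _ ≤ Kf + c₂ * (d₂ * h m + |K|) := by nlinarith
    _ = c₂ * d₂ * h m + (Kf + c₂ * |K|) := by ring
    _ ≤ c₂ * d₂ * h m + (Kf + c₂ * |K|) * h m := by
        have : 0 ≤ Kf + c₂ * |K| := by positivity
        nlinarith
    _ ≤ (c₂ * d₂ + Kf + c₂ * |K| + 1) * h m := by nlinarith
  
/-- Convergent-sum comparison. -/
theorem Th_sum_conv {f g : ℕ → ℝ} (hf0 : ∀ l, 0 ≤ f l) (hf1 : 1 ≤ f 1) (hfg : Th f g)
    (hG : Th (fun m => ∑ l ∈ Finset.Icc 1 m, g l) (P 0 0)) :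
    Th (fun m => ∑ l ∈ Finset.Icc 1 m, f l) (P 0 0) := by
  obtain ⟨c₁, c₂, hc₁, hc₂, hev⟩ := hfg.c₂_pos
  obtain ⟨L₀, hL₀⟩ := Filter.eventually_atTop.1 hev
  set L : ℕ := max L₀ 1 with hLdef
  have hL1 : 1 ≤ L := le_max_right _ _
  set K : ℝ := ∑ l ∈ Finset.Icc 1 (L-1), g l with hK
  set Kf : ℝ := ∑ l ∈ Finset.Icc 1 (L-1), f l with hKf
  have hKf0 : 0 ≤ Kf := Finset.sum_nonneg fun l _ => hf0 l
  obtain ⟨d₁, d₂, hd₁, hd₂, hev'⟩ := hG.c₂_pos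
  obtain ⟨N₀, hN₀⟩ := Filter.eventually_atTop.1 hev'
  set M₀ : ℕ := max N₀ L with hM₀
  set C₀ : ℝ := ∑ l ∈ Finset.Icc 1 M₀, f l with hC₀
  have hC₀0 : 0 ≤ C₀ := Finset.sum_nonneg fun l _ => hf0 l
  refine ⟨1, C₀ + Kf + c₂ * d₂ + c₂ * |K| + 1, one_pos, ?_⟩
  filter_upwards [Filter.eventually_ge_atTop 1] with m hm1
  have hP : P 0 0 m = 1 := by rw [P, Real.rpow_zero, Real.rpow_zero, one_mul]
  rw [hP, mul_one, mul_one]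
  refine ⟨one_pos, ?_, ?_⟩
  · calc (1:ℝ) ≤ f 1 := hf1
    _ ≤ ∑ l ∈ Finset.Icc 1 m, f l :=
        Finset.single_le_sum (fun l _ => hf0 l) (Finset.mem_Icc.2 ⟨le_rfl, hm1⟩)
  · rcases le_or_gt m M₀ with hcase | hcase
    · have : (∑ l ∈ Finset.Icc 1 m, f l) ≤ C₀ :=
        Finset.sum_le_sum_of_subset_of_nonneg (Finset.Icc_subset_Icc_right hcase)
          (fun l _ _ => hf0 l)
      have h5 : (0:ℝ) ≤ c₂ * |K| := by positivity
      nlinarith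
    · have hmL : L ≤ m := le_trans (le_max_right _ _) hcase.le
      have hmN : N₀ ≤ m := le_trans (le_max_left _ _) hcase.le
      obtain ⟨_, hG1, hG2⟩ := hN₀ m hmN
      have hPm : P 0 0 m = 1 := hP
      rw [hPm, mul_one] at hG2
      have hsplitf := sum_split f hL1 hmL
      have hsplitg := sum_split g hL1 hmL
      have hmem : ∀ l ∈ Finset.Ioc (L-1) m, L₀ ≤ l := by
        intro l hl
        rw [Finset.mem_Ioc] at hl
        have : L ≤ l := by omega
        omega
      have hup : ∀ l ∈ Finset.Ioc (L-1) m, f l ≤ c₂ * g l :=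
        fun l hl => (hL₀ l (hmem l hl)).2.2
      have h1 : (∑ l ∈ Finset.Icc 1 m, f l)
          ≤ Kf + c₂ * ((∑ l ∈ Finset.Icc 1 m, g l) - K) := by
        rw [hsplitf]
        have h2 : (∑ l ∈ Finset.Ioc (L-1) m, f l) ≤ c₂ * ∑ l ∈ Finset.Ioc (L-1) m, g l := by
          rw [Finset.mul_sum]
          exact Finset.sum_le_sum hup
        have h3 : (∑ l ∈ Finset.Ioc (L-1) m, g l) = (∑ l ∈ Finset.Icc 1 m, g l) - K := by
          rw [hsplitg]; ring
        rw [← h3]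
        linarith
      have h5 : -K ≤ |K| := neg_le_abs K
      calc (∑ l ∈ Finset.Icc 1 m, f l) ≤ Kf + c₂ * ((∑ l ∈ Finset.Icc 1 m, g l) - K) := h1
      _ ≤ Kf + c₂ * (d₂ + |K|) := by nlinarith
      _ ≤ C₀ + Kf + c₂ * d₂ + c₂ * |K| + 1 := by nlinarith

theorem D1_eq (φ : ℝ) (l : ℕ) : D1 φ l = (F (-φ) l)⁻¹ * F (1-φ) l := by
  simp [D1, Zphi, F]

theorem D1_nonneg (φ : ℝ) (l : ℕ) : 0 ≤ D1 φ l := by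
  rw [D1_eq]
  exact mul_nonneg (inv_nonneg.2 (F_nonneg _ _)) (F_nonneg _ _)

theorem D1_one (φ : ℝ) : D1 φ 1 = 1 := by
  simp [D1, Zphi, Real.one_rpow]

theorem Th_D1_general {φ a b a' b' : ℝ} (hZ : Th (F (-φ)) (P a b))
    (hN : Th (F (1-φ)) (P a' b')) : Th (D1 φ) (P (a'-a) (b'-b)) := by
  have h2 := hZ.inv.mul hN
  have h3 : Th (D1 φ) (fun l => (P a b l)⁻¹ * P a' b' l) :=
    h2.congr_left (Filter.Eventually.of_forall fun l => (D1_eq φ l).symm)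
  apply h3.congr_right
  filter_upwards [Filter.eventually_ge_atTop 2] with l hl2
  rw [P_inv (by omega), P_mul hl2]
  congr 1 <;> ring

theorem Th_f_general {γ φ α β : ℝ} (hD : Th (D1 φ) (P α β)) :
    Th (fun l => (l:ℝ)^(-γ) * D1 φ l) (P (α-γ) β) := by
  have hr : Th (fun l : ℕ => (l:ℝ)^(-γ)) (fun l : ℕ => (l:ℝ)^(-γ)) := by
    apply Th.refl
    filter_upwards [Filter.eventually_ge_atTop 1] with l hl
    exact Real.rpow_pos_of_pos (by exact_mod_cast hl.trans_lt' (by norm_num)) _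
  apply (hr.mul hD).congr_right
  filter_upwards [Filter.eventually_ge_atTop 2] with l hl2
  have hl0 : (0:ℝ) < l := by
    have : (2:ℝ) ≤ l := by exact_mod_cast hl2
    linarith
  rw [P, P, ← mul_assoc, ← Real.rpow_add hl0]
  congr 2
  ring

theorem f_nonneg (γ φ : ℝ) : ∀ l : ℕ, 0 ≤ (l:ℝ)^(-γ) * D1 φ l :=
  fun l => mul_nonneg (Real.rpow_nonneg (Nat.cast_nonneg l) _) (D1_nonneg φ l)

theorem f_one (γ φ : ℝ) : (1:ℝ) ≤ ((1:ℕ):ℝ)^(-γ) * D1 φ 1 := by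
  rw [D1_one, Nat.cast_one, Real.one_rpow, mul_one]

theorem sum_P0 (q : ℝ) (m : ℕ) : (∑ l ∈ Finset.Icc 1 m, P q 0 l) = F q m :=
  Finset.sum_congr rfl fun l _ => P_zero_eq q l

theorem sum_P1 (q : ℝ) (m : ℕ) : (∑ l ∈ Finset.Icc 1 m, P q 1 l) = FL q m :=
  Finset.sum_congr rfl fun l _ => P_one_eq q l

theorem sum_Pneg1 (q : ℝ) (m : ℕ) : (∑ l ∈ Finset.Icc 1 m, P q (-1) l) = FIL q m :=
  Finset.sum_congr rfl fun l hl => P_negone_eq q (Finset.mem_Icc.1 hl).1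

/-- Divergent S-builder. -/
theorem Th_S_div {γ φ α β a b : ℝ} (hD : Th (D1 φ) (P α β))
    (hG : Th (fun m => ∑ l ∈ Finset.Icc 1 m, P (α-γ) β l) (P a b))
    (hh : Filter.Tendsto (P a b) Filter.atTop Filter.atTop) :
    Th (fun m => ∑ l ∈ Finset.Icc 1 m, (l:ℝ)^(-γ) * D1 φ l) (P a b) :=
  Th_sum_div (f_nonneg γ φ) (Th_f_general hD) hG hh

/-- Convergent S-builder. -/
theorem Th_S_conv {γ φ α β : ℝ} (hD : Th (D1 φ) (P α β))
    (hG : Th (fun m => ∑ l ∈ Finset.Icc 1 m, P (α-γ) β l) (P 0 0)) :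
    Th (fun m => ∑ l ∈ Finset.Icc 1 m, (l:ℝ)^(-γ) * D1 φ l) (P 0 0) :=
  Th_sum_conv (f_nonneg γ φ) (f_one γ φ) (Th_f_general hD) hG

theorem Th_n : Th (fun n : ℕ => (n:ℝ)) (P 1 0) := by
  have hr : Th (fun n : ℕ => (n:ℝ)) (fun n : ℕ => (n:ℝ)) := by
    apply Th.refl
    filter_upwards [Filter.eventually_ge_atTop 1] with n hn
    exact_mod_cast hn.trans_lt' (by norm_num)
  apply hr.congr_right
  apply Filter.Eventually.of_forall
  intro n
  rw [P_zero_eq, Real.rpow_one]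

/-- Master builder: `W γ φ ≍ P (1 - a₁ + a₂) (b₂ - b₁)` from the growth classes
of `Z` and of the inner sum. -/
theorem W_theta {γ φ a₁ b₁ a₂ b₂ : ℝ}
    (hZ : Th (F (-γ)) (P a₁ b₁))
    (hS : Th (fun m => ∑ l ∈ Finset.Icc 1 m, (l:ℝ)^(-γ) * D1 φ l) (P a₂ b₂)) :
    Th (fun n => W γ φ n) (P (1 - a₁ + a₂) (b₂ - b₁)) := by
  have hZ' : Th (fun n => (F (-γ) (n-1))⁻¹) (fun n => P (-a₁) (-b₁) (n-1)) := by
    apply hZ.shift.inv.congr_right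
    filter_upwards [Filter.eventually_ge_atTop 2] with n hn
    exact P_inv (by omega)
  have hprod : Th (fun n => (F (-γ) (n-1))⁻¹ * (∑ l ∈ Finset.Icc 1 (n-1), (l:ℝ)^(-γ) * D1 φ l))
      (fun n => P (-a₁ + a₂) (-b₁ + b₂) (n-1)) := by
    apply (hZ'.mul hS.shift).congr_right
    filter_upwards [Filter.eventually_ge_atTop 3] with n hn
    exact P_mul (by omega)
  have htail := hprod.trans (Th_P_shift (-a₁ + a₂) (-b₁ + b₂))
  have hw := (Th_n.mul htail).congr_right (by
    filter_upwards [Filter.eventually_ge_atTop 2] with n hn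
    exact P_mul hn)
  have he1 : (1:ℝ) + (-a₁ + a₂) = 1 - a₁ + a₂ := by ring
  have he2 : (0:ℝ) + (-b₁ + b₂) = b₂ - b₁ := by ring
  rw [he1, he2] at hw
  apply hw.congr_left
  apply Filter.Eventually.of_forall
  intro n
  show (n:ℝ) * ((F (-γ) (n-1))⁻¹ * _) = W γ φ n
  rw [W, Z]
  rw [show F (-γ) (n-1) = ∑ j ∈ Finset.Icc 1 (n - 1), (j : ℝ) ^ (-γ) from rfl]
  ring

theorem Th_Z_lt {γ : ℝ} (h : γ < 1) : Th (F (-γ)) (P (1-γ) 0) := by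
  have h1 := Th_F_gt (show -1 < -γ by linarith)
  rwa [show -γ + 1 = 1 - γ by ring] at h1

theorem Th_Z_gt {γ : ℝ} (h : 1 < γ) : Th (F (-γ)) (P 0 0) :=
  Th_F_lt (by linarith)

theorem Th_D1_gt2 {φ : ℝ} (h : 2 < φ) : Th (D1 φ) (P 0 0) := by
  have := Th_D1_general (Th_F_lt (show -φ < -1 by linarith))
    (Th_F_lt (show 1 - φ < -1 by linarith))
  simpa using this

theorem Th_D1_eq2 : Th (D1 2) (P 0 1) := by
  have h2 : Th (F (1-2)) (P 0 1) := by
    rw [show (1:ℝ) - 2 = -1 by norm_num]; exact Th_F_one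
  have := Th_D1_general (Th_F_lt (show (-2:ℝ) < -1 by norm_num)) h2
  simpa using this

theorem Th_D1_mid {φ : ℝ} (h1 : 1 < φ) (h2 : φ < 2) : Th (D1 φ) (P (2-φ) 0) := by
  have hn := Th_F_gt (show -1 < 1 - φ by linarith)
  rw [show (1-φ) + 1 = 2 - φ by ring] at hn
  have := Th_D1_general (Th_F_lt (show -φ < -1 by linarith)) hn
  simpa using this

theorem Th_D1_eq1 : Th (D1 1) (P 1 (-1)) := by
  have hn : Th (F (1-1)) (P 1 0) := by
    have := Th_F_gt (show (-1:ℝ) < 0 by norm_num)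
    rw [show (0:ℝ) + 1 = 1 by norm_num] at this
    rwa [show (1:ℝ) - 1 = 0 by norm_num]
  have := Th_D1_general Th_F_one hn
  have he1 : (1:ℝ) - 0 = 1 := by norm_num
  have he2 : (0:ℝ) - 1 = -1 := by norm_num
  rwa [he1, he2] at this

theorem Th_D1_lt1 {φ : ℝ} (h : φ < 1) : Th (D1 φ) (P 1 0) := by
  have hz := Th_F_gt (show -1 < -φ by linarith)
  have hn := Th_F_gt (show -1 < 1 - φ by linarith)
  have := Th_D1_general hz hn
  rwa [show (1 - φ + 1) - (-φ + 1) = 1 by ring, show (0:ℝ) - 0 = 0 by ring] at this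

theorem ThSum_P0_gt (q : ℝ) (hq : -1 < q) :
    Th (fun m => ∑ l ∈ Finset.Icc 1 m, P q 0 l) (P (q+1) 0) :=
  (Th_F_gt hq).congr_left (Filter.Eventually.of_forall fun m => (sum_P0 q m).symm)

theorem ThSum_P0_one :
    Th (fun m => ∑ l ∈ Finset.Icc 1 m, P (-1) 0 l) (P 0 1) :=
  Th_F_one.congr_left (Filter.Eventually.of_forall fun m => (sum_P0 (-1) m).symm)

theorem ThSum_P0_lt (q : ℝ) (hq : q < -1) :
    Th (fun m => ∑ l ∈ Finset.Icc 1 m, P q 0 l) (P 0 0) :=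
  (Th_F_lt hq).congr_left (Filter.Eventually.of_forall fun m => (sum_P0 q m).symm)

theorem ThSum_P1_gt (q : ℝ) (hq : -1 < q) (hq0 : q ≤ 0) :
    Th (fun m => ∑ l ∈ Finset.Icc 1 m, P q 1 l) (P (q+1) 1) :=
  (Th_FL_gt hq hq0).congr_left (Filter.Eventually.of_forall fun m => (sum_P1 q m).symm)

theorem ThSum_P1_one :
    Th (fun m => ∑ l ∈ Finset.Icc 1 m, P (-1) 1 l) (P 0 2) :=
  Th_FL_one.congr_left (Filter.Eventually.of_forall fun m => (sum_P1 (-1) m).symm)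

theorem ThSum_P1_lt (q : ℝ) (hq : q < -1) :
    Th (fun m => ∑ l ∈ Finset.Icc 1 m, P q 1 l) (P 0 0) :=
  (Th_FL_lt hq).congr_left (Filter.Eventually.of_forall fun m => (sum_P1 q m).symm)

theorem ThSum_Pneg1_gt (q : ℝ) (hq : -1 < q) :
    Th (fun m => ∑ l ∈ Finset.Icc 1 m, P q (-1) l) (P (q+1) (-1)) :=
  (Th_FIL_gt hq).congr_left (Filter.Eventually.of_forall fun m => (sum_Pneg1 q m).symm)

theorem ThSum_Pneg1_lt (q : ℝ) (hq : q < -1) :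
    Th (fun m => ∑ l ∈ Finset.Icc 1 m, P q (-1) l) (P 0 0) :=
  (Th_FIL_lt hq).congr_left (Filter.Eventually.of_forall fun m => (sum_Pneg1 q m).symm)

theorem Th_S_div' (γ : ℝ) {φ α β a b : ℝ} (q : ℝ) (hD : Th (D1 φ) (P α β)) (hq : α - γ = q)
    (hG : Th (fun m => ∑ l ∈ Finset.Icc 1 m, P q β l) (P a b))
    (hh : Filter.Tendsto (P a b) Filter.atTop Filter.atTop) :
    Th (fun m => ∑ l ∈ Finset.Icc 1 m, (l:ℝ)^(-γ) * D1 φ l) (P a b) := by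
  subst hq; exact Th_S_div hD hG hh

theorem Th_S_conv' (γ : ℝ) {φ α β : ℝ} (q : ℝ) (hD : Th (D1 φ) (P α β)) (hq : α - γ = q)
    (hG : Th (fun m => ∑ l ∈ Finset.Icc 1 m, P q β l) (P 0 0)) :
    Th (fun m => ∑ l ∈ Finset.Icc 1 m, (l:ℝ)^(-γ) * D1 φ l) (P 0 0) := by
  subst hq; exact Th_S_conv hD hG

theorem final_target {γ φ c d : ℝ} {tgt : ℕ → ℝ} (hw : Th (fun n => W γ φ n) (P c d))
    (he : ∀ᶠ n in Filter.atTop, P c d n = tgt n) :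
    IsBigTheta (fun n => W γ φ n) tgt :=
  (hw.congr_right he).isBigTheta

theorem P_eq_n (n : ℕ) : P 1 0 n = (n:ℝ) := by
  rw [P_zero_eq, Real.rpow_one]

theorem P_eq_nlog (n : ℕ) : P 1 1 n = (n:ℝ) * Real.log n := by
  rw [P_one_eq, Real.rpow_one]

theorem P_eq_rpow_div_log (c : ℝ) {n : ℕ} (hn : 1 ≤ n) :
    P c (-1) n = (n:ℝ)^c / Real.log n := by
  rw [P_negone_eq c hn, div_eq_mul_inv]

theorem P_eq_sq {n : ℕ} : P 2 0 n = (n:ℝ)^(2:ℕ) := by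
  rw [P_zero_eq, show (2:ℝ) = ((2:ℕ):ℝ) by norm_num, Real.rpow_natCast]

theorem P_eq_sq_div_log {n : ℕ} (hn : 1 ≤ n) : P 2 (-1) n = (n:ℝ)^(2:ℕ) / Real.log n := by
  rw [P_eq_rpow_div_log 2 hn, show (2:ℝ) = ((2:ℕ):ℝ) by norm_num, Real.rpow_natCast]

theorem P_eq_sq_div_logsq {n : ℕ} (hn : 2 ≤ n) :
    P 2 (-2) n = (n:ℝ)^(2:ℕ) / Real.log n ^ (2:ℕ) := by
  have hlog : (0:ℝ) < Real.log n := Real.log_pos (by exact_mod_cast hn |>.trans_lt' one_lt_two)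
  rw [P, show (2:ℝ) = ((2:ℕ):ℝ) by norm_num, Real.rpow_natCast,
    show (-((2:ℕ):ℝ)) = -(2:ℝ) by norm_num, Real.rpow_neg hlog.le,
    show (2:ℝ) = ((2:ℕ):ℝ) by norm_num, Real.rpow_natCast, div_eq_mul_inv]

theorem expected_total_destinations_order (γ φ : ℝ) (hγ : 0 ≤ γ) (hφ : 0 ≤ φ) :
    (2 < φ → IsBigTheta (fun n => W γ φ n) (fun n => (n : ℝ))) ∧
    (φ = 2 →
      (1 < γ → IsBigTheta (fun n => W γ φ n) (fun n => (n : ℝ))) ∧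
      (γ ≤ 1 → IsBigTheta (fun n => W γ φ n) (fun n => (n : ℝ) * Real.log n))) ∧
    (1 < φ ∧ φ < 2 →
      (3 - φ < γ → IsBigTheta (fun n => W γ φ n) (fun n => (n : ℝ))) ∧
      (γ = 3 - φ → IsBigTheta (fun n => W γ φ n) (fun n => (n : ℝ) * Real.log n)) ∧
      (1 < γ ∧ γ < 3 - φ →
        IsBigTheta (fun n => W γ φ n) (fun n => (n : ℝ) ^ (4 - γ - φ))) ∧
      (γ = 1 → IsBigTheta (fun n => W γ φ n) (fun n => (n : ℝ) ^ (3 - φ) / Real.log n)) ∧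
      (γ < 1 → IsBigTheta (fun n => W γ φ n) (fun n => (n : ℝ) ^ (3 - φ)))) ∧
    (φ = 1 →
      (2 < γ → IsBigTheta (fun n => W γ φ n) (fun n => (n : ℝ))) ∧
      (1 < γ ∧ γ < 2 →
        IsBigTheta (fun n => W γ φ n) (fun n => (n : ℝ) ^ (3 - γ) / Real.log n)) ∧
      (γ = 1 → IsBigTheta (fun n => W γ φ n) (fun n => (n : ℝ) ^ 2 / Real.log n ^ 2)) ∧
      (γ < 1 → IsBigTheta (fun n => W γ φ n) (fun n => (n : ℝ) ^ 2 / Real.log n))) ∧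
    (φ < 1 →
      (2 < γ → IsBigTheta (fun n => W γ φ n) (fun n => (n : ℝ))) ∧
      (γ = 2 → IsBigTheta (fun n => W γ φ n) (fun n => (n : ℝ) * Real.log n)) ∧
      (1 < γ ∧ γ < 2 → IsBigTheta (fun n => W γ φ n) (fun n => (n : ℝ) ^ (3 - γ))) ∧
      (γ = 1 → IsBigTheta (fun n => W γ φ n) (fun n => (n : ℝ) ^ 2 / Real.log n)) ∧
      (γ < 1 → IsBigTheta (fun n => W γ φ n) (fun n => (n : ℝ) ^ 2))) := by
  refine ⟨?_, ?_, ?_, ?_, ?_⟩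
  · -- φ > 2
    intro hφ2
    have hD := Th_D1_gt2 hφ2
    rcases lt_trichotomy γ 1 with hγ1 | hγ1 | hγ1
    · have hZ := Th_Z_lt hγ1
      have hS := Th_S_div' γ (-γ) hD (by ring) (ThSum_P0_gt (-γ) (by linarith))
        (tendsto_P_pos 0 (by linarith))
      have hw := W_theta hZ hS
      rw [show (1 - (1-γ) + (-γ+1) : ℝ) = 1 by ring, show ((0:ℝ) - 0) = 0 by norm_num] at hw
      exact final_target hw (Filter.Eventually.of_forall fun n => P_eq_n n)
    · subst hγ1
      have hS := Th_S_div' 1 (-1) hD (by norm_num) ThSum_P0_one (tendsto_P_log one_pos)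
      have hw := W_theta Th_F_one hS
      rw [show (1 - 0 + 0 : ℝ) = 1 by norm_num, show ((1:ℝ) - 1) = 0 by norm_num] at hw
      exact final_target hw (Filter.Eventually.of_forall fun n => P_eq_n n)
    · have hZ := Th_Z_gt hγ1
      have hS := Th_S_conv' γ (-γ) hD (by ring) (ThSum_P0_lt (-γ) (by linarith))
      have hw := W_theta hZ hS
      rw [show (1 - 0 + 0 : ℝ) = 1 by norm_num, show ((0:ℝ) - 0) = 0 by norm_num] at hw
      exact final_target hw (Filter.Eventually.of_forall fun n => P_eq_n n)
  · -- φ = 2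
    rintro rfl
    have hD := Th_D1_eq2
    constructor
    · intro hγ1
      have hZ := Th_Z_gt hγ1
      have hS := Th_S_conv' γ (-γ) hD (by ring) (ThSum_P1_lt (-γ) (by linarith))
      have hw := W_theta hZ hS
      rw [show (1 - 0 + 0 : ℝ) = 1 by norm_num, show ((0:ℝ) - 0) = 0 by norm_num] at hw
      exact final_target hw (Filter.Eventually.of_forall fun n => P_eq_n n)
    · intro hγ1
      rcases eq_or_lt_of_le hγ1 with h1 | h1
      · subst h1
        have hS := Th_S_div' 1 (-1) hD (by norm_num) ThSum_P1_one (tendsto_P_log two_pos)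
        have hw := W_theta Th_F_one hS
        rw [show (1 - 0 + 0 : ℝ) = 1 by norm_num, show ((2:ℝ) - 1) = 1 by norm_num] at hw
        exact final_target hw (Filter.Eventually.of_forall fun n => P_eq_nlog n)
      · have hZ := Th_Z_lt h1
        have hS := Th_S_div' γ (-γ) hD (by ring)
          (ThSum_P1_gt (-γ) (by linarith) (by linarith)) (tendsto_P_pos 1 (by linarith))
        have hw := W_theta hZ hS
        rw [show (1 - (1-γ) + (-γ+1) : ℝ) = 1 by ring, show ((1:ℝ) - 0) = 1 by norm_num] at hw
        exact final_target hw (Filter.Eventually.of_forall fun n => P_eq_nlog n)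
  · -- 1 < φ < 2
    rintro ⟨hφ1, hφ2⟩
    have hD := Th_D1_mid hφ1 hφ2
    refine ⟨?_, ?_, ?_, ?_, ?_⟩
    · intro h
      have hZ := Th_Z_gt (show (1:ℝ) < γ by linarith)
      have hS := Th_S_conv' γ (2-φ-γ) hD (by ring) (ThSum_P0_lt (2-φ-γ) (by linarith))
      have hw := W_theta hZ hS
      rw [show (1 - 0 + 0 : ℝ) = 1 by norm_num, show ((0:ℝ) - 0) = 0 by norm_num] at hw
      exact final_target hw (Filter.Eventually.of_forall fun n => P_eq_n n)
    · rintro rfl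
      have hZ := Th_Z_gt (by linarith : (1:ℝ) < 3 - φ)
      have hS := Th_S_div' (3-φ) (-1) hD (by ring) ThSum_P0_one (tendsto_P_log one_pos)
      have hw := W_theta hZ hS
      rw [show (1 - 0 + 0 : ℝ) = 1 by norm_num, show ((1:ℝ) - 0) = 1 by norm_num] at hw
      exact final_target hw (Filter.Eventually.of_forall fun n => P_eq_nlog n)
    · rintro ⟨h1, h2⟩
      have hZ := Th_Z_gt h1
      have hS := Th_S_div' γ (2-φ-γ) hD (by ring) (ThSum_P0_gt (2-φ-γ) (by linarith))
        (tendsto_P_pos 0 (by linarith))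
      have hw := W_theta hZ hS
      rw [show (1 - 0 + (2-φ-γ+1) : ℝ) = 4 - γ - φ by ring,
        show ((0:ℝ) - 0) = 0 by norm_num] at hw
      exact final_target hw (Filter.Eventually.of_forall fun n => P_zero_eq _ n)
    · rintro rfl
      have hS := Th_S_div' 1 (2-φ-1) hD (by ring) (ThSum_P0_gt (2-φ-1) (by linarith))
        (tendsto_P_pos 0 (by linarith))
      have hw := W_theta Th_F_one hS
      rw [show (1 - 0 + (2-φ-1+1) : ℝ) = 3 - φ by ring, show ((0:ℝ) - 1) = -1 by norm_num] at hw
      apply final_target hw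
      filter_upwards [Filter.eventually_ge_atTop 1] with n hn
      exact P_eq_rpow_div_log (3-φ) hn
    · intro h
      have hZ := Th_Z_lt h
      have hS := Th_S_div' γ (2-φ-γ) hD (by ring) (ThSum_P0_gt (2-φ-γ) (by linarith))
        (tendsto_P_pos 0 (by linarith))
      have hw := W_theta hZ hS
      rw [show (1 - (1-γ) + (2-φ-γ+1) : ℝ) = 3 - φ by ring,
        show ((0:ℝ) - 0) = 0 by norm_num] at hw
      exact final_target hw (Filter.Eventually.of_forall fun n => P_zero_eq _ n)
  · -- φ = 1
    rintro rfl
    have hD := Th_D1_eq1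
    refine ⟨?_, ?_, ?_, ?_⟩
    · intro h
      have hZ := Th_Z_gt (show (1:ℝ) < γ by linarith)
      have hS := Th_S_conv' γ (1-γ) hD (by ring) (ThSum_Pneg1_lt (1-γ) (by linarith))
      have hw := W_theta hZ hS
      rw [show (1 - 0 + 0 : ℝ) = 1 by norm_num, show ((0:ℝ) - 0) = 0 by norm_num] at hw
      exact final_target hw (Filter.Eventually.of_forall fun n => P_eq_n n)
    · rintro ⟨h1, h2⟩
      have hZ := Th_Z_gt h1
      have hS := Th_S_div' γ (1-γ) hD (by ring) (ThSum_Pneg1_gt (1-γ) (by linarith))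
        (tendsto_P_pos (-1) (by linarith))
      have hw := W_theta hZ hS
      rw [show (1 - 0 + (1-γ+1) : ℝ) = 3 - γ by ring,
        show ((-1:ℝ) - 0) = -1 by norm_num] at hw
      apply final_target hw
      filter_upwards [Filter.eventually_ge_atTop 1] with n hn
      exact P_eq_rpow_div_log (3-γ) hn
    · rintro rfl
      have hS := Th_S_div' 1 0 hD (by norm_num) (ThSum_Pneg1_gt 0 (by norm_num))
        (tendsto_P_pos (-1) (by norm_num))
      have hw := W_theta Th_F_one hS
      rw [show (1 - 0 + (0+1) : ℝ) = 2 by norm_num, show ((-1:ℝ) - 1) = -2 by norm_num] at hw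
      apply final_target hw
      filter_upwards [Filter.eventually_ge_atTop 2] with n hn
      exact P_eq_sq_div_logsq hn
    · intro h
      have hZ := Th_Z_lt h
      have hS := Th_S_div' γ (1-γ) hD (by ring) (ThSum_Pneg1_gt (1-γ) (by linarith))
        (tendsto_P_pos (-1) (by linarith))
      have hw := W_theta hZ hS
      rw [show (1 - (1-γ) + (1-γ+1) : ℝ) = 2 by ring, show ((-1:ℝ) - 0) = -1 by norm_num] at hw
      apply final_target hw
      filter_upwards [Filter.eventually_ge_atTop 1] with n hn
      exact P_eq_sq_div_log hn
  · -- φ < 1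
    intro hφ1
    have hD := Th_D1_lt1 hφ1
    refine ⟨?_, ?_, ?_, ?_, ?_⟩
    · intro h
      have hZ := Th_Z_gt (show (1:ℝ) < γ by linarith)
      have hS := Th_S_conv' γ (1-γ) hD (by ring) (ThSum_P0_lt (1-γ) (by linarith))
      have hw := W_theta hZ hS
      rw [show (1 - 0 + 0 : ℝ) = 1 by norm_num, show ((0:ℝ) - 0) = 0 by norm_num] at hw
      exact final_target hw (Filter.Eventually.of_forall fun n => P_eq_n n)
    · rintro rfl
      have hZ := Th_Z_gt (by norm_num : (1:ℝ) < 2)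
      have hS := Th_S_div' 2 (-1) hD (by norm_num) ThSum_P0_one (tendsto_P_log one_pos)
      have hw := W_theta hZ hS
      rw [show (1 - 0 + 0 : ℝ) = 1 by norm_num, show ((1:ℝ) - 0) = 1 by norm_num] at hw
      exact final_target hw (Filter.Eventually.of_forall fun n => P_eq_nlog n)
    · rintro ⟨h1, h2⟩
      have hZ := Th_Z_gt h1
      have hS := Th_S_div' γ (1-γ) hD (by ring) (ThSum_P0_gt (1-γ) (by linarith))
        (tendsto_P_pos 0 (by linarith))
      have hw := W_theta hZ hS
      rw [show (1 - 0 + (1-γ+1) : ℝ) = 3 - γ by ring, show ((0:ℝ) - 0) = 0 by norm_num] at hw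
      exact final_target hw (Filter.Eventually.of_forall fun n => P_zero_eq _ n)
    · rintro rfl
      have hS := Th_S_div' 1 0 hD (by norm_num) (ThSum_P0_gt 0 (by norm_num))
        (tendsto_P_pos 0 (by norm_num))
      have hw := W_theta Th_F_one hS
      rw [show (1 - 0 + (0+1) : ℝ) = 2 by norm_num, show ((0:ℝ) - 1) = -1 by norm_num] at hw
      apply final_target hw
      filter_upwards [Filter.eventually_ge_atTop 1] with n hn
      exact P_eq_sq_div_log hn
    · intro h
      have hZ := Th_Z_lt h
      have hS := Th_S_div' γ (1-γ) hD (by ring) (ThSum_P0_gt (1-γ) (by linarith))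
        (tendsto_P_pos 0 (by linarith))
      have hw := W_theta hZ hS
      rw [show (1 - (1-γ) + (1-γ+1) : ℝ) = 2 by ring, show ((0:ℝ) - 0) = 0 by norm_num] at hw
      exact final_target hw (Filter.Eventually.of_forall fun n => P_eq_sq)
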